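/- arXiv:math/0510048 — 7 statements merged into one kernel-verified Lean document; each statement's English description precedes it below -/
import Mathlib

section
/- There exists a constant C > 0 such that for every integer k ≥ 2 and every integer j with 1 ≤ j ≤ k−1, setting d = 2k+1, one has exp(−(d/π)·Λ(πj/d) − C·log d) ≤ ∏_{i=1}^{j} 2·sin(iπ/d) ≤ exp(−(d/π)·Λ(πj/d) + C·log d). (Note that ∏_{i=1}^{j} 2 sin(iπ/d) = (2 sin(π/d))^j · [j]_d!, i.e. this bounds the evaluated quantum factorial.) -/
open Real Filter Finset

/-- The Lobachevsky function Λ(x) = −∫₀ˣ log|2 sin s| ds. -/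
noncomputable def Lob (x : ℝ) : ℝ := -∫ s in (0:ℝ)..x, Real.log |2 * Real.sin s|

namespace QfAux

open MeasureTheory Set intervalIntegral

noncomputable def f (s : ℝ) : ℝ := Real.log |2 * Real.sin s|

lemma f_meas : Measurable f :=
  Real.measurable_log.comp ((measurable_const.mul Real.continuous_sin.measurable).abs)

lemma two_sin_pos {s : ℝ} (h0 : 0 < s) (h1 : s < π) : 0 < 2 * Real.sin s := by
  have := Real.sin_pos_of_pos_of_lt_pi h0 h1; linarith

lemma f_eq {s : ℝ} (h0 : 0 ≤ s) (h1 : s ≤ π) : f s = Real.log (2 * Real.sin s) := by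
  unfold f
  rw [abs_of_nonneg]
  have := Real.sin_nonneg_of_nonneg_of_le_pi h0 h1; linarith

lemma le_two_sin {s : ℝ} (h0 : 0 ≤ s) (h2 : s ≤ π/2) : s ≤ 2 * Real.sin s := by
  have h := Real.mul_le_sin h0 h2
  have h4 := Real.pi_le_four
  have hπ := Real.pi_pos
  have he : 2 / π * s * π = 2 * s := by field_simp
  nlinarith [Real.sin_nonneg_of_nonneg_of_le_pi h0 (by linarith)]

lemma f_mono {s t : ℝ} (h0 : 0 < s) (hst : s ≤ t) (h2 : t ≤ π/2) : f s ≤ f t := by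
  have hπ := Real.pi_pos
  rw [f_eq h0.le (by linarith), f_eq (by linarith) (by linarith)]
  have hs : Real.sin s ≤ Real.sin t := by
    rcases eq_or_lt_of_le hst with rfl | h
    · exact le_rfl
    · exact (Real.strictMonoOn_sin ⟨by linarith, by linarith⟩ ⟨by linarith, h2⟩ h).le
  exact Real.log_le_log (two_sin_pos h0 (by linarith)) (by linarith)

lemma f_lower {s : ℝ} (h0 : 0 < s) (h2 : s ≤ π/2) : Real.log s ≤ f s := by
  rw [f_eq h0.le (by have := Real.pi_pos; linarith)]
  exact Real.log_le_log h0 (le_two_sin h0.le h2)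

lemma f_upper {s : ℝ} (h0 : 0 < s) (h2 : s ≤ π/2) : f s ≤ Real.log 2 + Real.log s := by
  rw [f_eq h0.le (by have := Real.pi_pos; linarith), ← Real.log_mul two_ne_zero h0.ne']
  exact Real.log_le_log (two_sin_pos h0 (by have := Real.pi_pos; linarith))
    (by have := Real.sin_lt h0; linarith)

lemma f_le_log_two {s : ℝ} (h0 : 0 < s) (h1 : s < π) : f s ≤ Real.log 2 := by
  rw [f_eq h0.le h1.le]
  exact Real.log_le_log (two_sin_pos h0 h1) (by have := Real.sin_le_one s; linarith)

lemma intInt_log0 {b : ℝ} (hb : 0 ≤ b) : IntervalIntegrable Real.log volume 0 b := by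
  have key : ∀ c : ℝ, 0 ≤ c → c ≤ 1 → IntervalIntegrable Real.log volume 0 c := by
    intro c hc hc1
    have hcont : ContinuousOn (fun x : ℝ => x - x * Real.log x) (Icc 0 c) :=
      (continuous_id.sub Real.continuous_mul_log).continuousOn
    have hderiv : ∀ x ∈ Ioo (0:ℝ) c,
        HasDerivAt (fun x : ℝ => x - x * Real.log x) (-Real.log x) x := by
      intro x hx
      have := (hasDerivAt_id x).sub (Real.hasDerivAt_mul_log hx.1.ne')
      exact this.congr_deriv (by ring)
    have hpos : ∀ x ∈ Ioo (0:ℝ) c, 0 ≤ -Real.log x := by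
      intro x hx
      have := Real.log_nonpos hx.1.le (by linarith [hx.2])
      linarith
    have h1 : IntegrableOn (fun x => -Real.log x) (Ioc 0 c) volume :=
      integrableOn_deriv_of_nonneg hcont hderiv hpos
    have h2 : IntegrableOn Real.log (Ioc 0 c) volume := integrable_neg_iff.mp h1
    exact (intervalIntegrable_iff_integrableOn_Ioc_of_le hc).mpr h2
  rcases le_total b 1 with hb1 | hb1
  · exact key b hb hb1
  · exact (key 1 zero_le_one le_rfl).trans
      (intervalIntegrable_log (by
        simp only [Set.uIcc_of_le hb1, Set.mem_Icc]
        intro h; linarith [h.1]))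

lemma integral_log0 {b : ℝ} (hb : 0 ≤ b) :
    ∫ s in (0:ℝ)..b, Real.log s = b * Real.log b - b := by
  have hcont : ContinuousOn (fun x : ℝ => x * Real.log x - x) (Icc 0 b) :=
    (Real.continuous_mul_log.sub continuous_id).continuousOn
  have hderiv : ∀ x ∈ Ioo (0:ℝ) b,
      HasDerivWithinAt (fun x : ℝ => x * Real.log x - x) (Real.log x) (Ioi x) x := by
    intro x hx
    have h1 := (Real.hasDerivAt_mul_log hx.1.ne').sub (hasDerivAt_id x)
    have h2 : HasDerivAt (fun x : ℝ => x * Real.log x - x) (Real.log x) x := by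
      exact h1.congr_deriv (by ring)
    exact h2.hasDerivWithinAt
  have := intervalIntegral.integral_eq_sub_of_hasDeriv_right_of_le hb hcont hderiv
    (intInt_log0 hb)
  simpa using this

lemma intInt_f {x : ℝ} (h0 : 0 ≤ x) (h2 : x ≤ π/2) :
    IntervalIntegrable f volume 0 x := by
  have hg : IntervalIntegrable (fun s => |Real.log s| + Real.log 2) volume 0 x :=
    (intInt_log0 h0).abs.add intervalIntegrable_const
  refine hg.mono_fun' (f_meas.aestronglyMeasurable.restrict) ?_
  rw [Set.uIoc_of_le h0]
  refine (MeasureTheory.ae_restrict_iff' measurableSet_Ioc).mpr (Filter.Eventually.of_forall ?_)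
  intro s hs
  have hs0 : 0 < s := hs.1
  have hs2 : s ≤ π/2 := hs.2.trans h2
  have hl := f_lower hs0 hs2
  have hu := f_upper hs0 hs2
  have hlog2 : (0:ℝ) ≤ Real.log 2 := Real.log_nonneg one_le_two
  simp only [Real.norm_eq_abs, abs_le]
  constructor
  · have : -|Real.log s| ≤ Real.log s := neg_abs_le _
    linarith
  · have : Real.log s ≤ |Real.log s| := le_abs_self _
    linarith

lemma ae_Icc_of_Ioc {a b : ℝ} {p : ℝ → Prop} (h : ∀ s ∈ Ioc a b, p s) :
    ∀ᵐ s ∂(volume.restrict (Icc a b)), p s := by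
  rw [MeasureTheory.ae_restrict_iff' measurableSet_Icc]
  have h0 : ∀ᵐ (s : ℝ), s ≠ a := by
    rw [MeasureTheory.ae_iff]
    simp only [not_not]
    rw [show {s : ℝ | s = a} = {a} from rfl]
    exact measure_singleton a
  filter_upwards [h0] with s hs hmem
  exact h s ⟨lt_of_le_of_ne hmem.1 (Ne.symm hs), hmem.2⟩

lemma int_mono_Ioc {φ ψ : ℝ → ℝ} {a b : ℝ} (hab : a ≤ b)
    (hφ : IntervalIntegrable φ volume a b) (hψ : IntervalIntegrable ψ volume a b)
    (h : ∀ s ∈ Ioc a b, φ s ≤ ψ s) :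
    ∫ s in a..b, φ s ≤ ∫ s in a..b, ψ s :=
  intervalIntegral.integral_mono_ae_restrict hab hφ hψ (ae_Icc_of_Ioc h)

lemma int_le_const {φ : ℝ → ℝ} {a b c : ℝ} (hab : a ≤ b)
    (hφ : IntervalIntegrable φ volume a b) (h : ∀ s ∈ Ioc a b, φ s ≤ c) :
    ∫ s in a..b, φ s ≤ (b - a) * c := by
  have := int_mono_Ioc hab hφ (_root_.intervalIntegrable_const (c := c)) h
  simpa [smul_eq_mul, mul_comm] using this

lemma const_le_int {φ : ℝ → ℝ} {a b c : ℝ} (hab : a ≤ b)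
    (hφ : IntervalIntegrable φ volume a b) (h : ∀ s ∈ Ioc a b, c ≤ φ s) :
    (b - a) * c ≤ ∫ s in a..b, φ s := by
  have := int_mono_Ioc hab (_root_.intervalIntegrable_const (c := c)) hφ h
  simpa [smul_eq_mul, mul_comm] using this

end QfAux

open QfAux MeasureTheory Set intervalIntegral

/-- There is a constant `C > 0` such that for every `k ≥ 2` and `1 ≤ j ≤ k − 1`, with
`d = 2k+1`, the product `∏_{i=1}^{j} 2 sin(iπ/d)` (the evaluated quantum factorial
multiplied by `(2 sin(π/d))^j`) is bounded between
`exp(−(d/π)Λ(πj/d) ∓ C log d)`. -/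
theorem stmt_0 :
    ∃ C : ℝ, 0 < C ∧
      ∀ k j : ℕ, 2 ≤ k → 1 ≤ j → j ≤ k - 1 →
        Real.exp (-((2 * k + 1 : ℝ) / Real.pi) * Lob (Real.pi * j / (2 * k + 1))
            - C * Real.log (2 * k + 1))
          ≤ ∏ i ∈ Finset.Icc 1 j, 2 * Real.sin (i * Real.pi / (2 * k + 1)) ∧
        ∏ i ∈ Finset.Icc 1 j, 2 * Real.sin (i * Real.pi / (2 * k + 1))
          ≤ Real.exp (-((2 * k + 1 : ℝ) / Real.pi) * Lob (Real.pi * j / (2 * k + 1))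
            + C * Real.log (2 * k + 1)) := by
  refine ⟨2, two_pos, ?_⟩
  intro k j hk hj1 hjk
  have hπ := Real.pi_pos
  set d : ℝ := 2 * (k : ℝ) + 1 with hd_def
  have hk2 : (2:ℝ) ≤ (k:ℝ) := by exact_mod_cast hk
  have hd5 : (5:ℝ) ≤ d := by rw [hd_def]; linarith
  have hd0 : (0:ℝ) < d := by linarith
  set h : ℝ := π / d with hh_def
  have hh0 : 0 < h := div_pos hπ hd0
  have hhalf : h ≤ π / 2 := by
    rw [hh_def]
    exact div_le_div_of_nonneg_left hπ.le two_pos (by linarith)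
  have hh1 : h ≤ 1 := by
    rw [hh_def, div_le_one hd0]
    have := Real.pi_le_four; linarith
  set a : ℕ → ℝ := fun i => (i : ℝ) * h with ha_def
  have hjk' : j + 1 ≤ k := by omega
  have ha0 : a 0 = 0 := by simp [ha_def]
  have ha_le : ∀ i : ℕ, i ≤ k → a i ≤ π / 2 := by
    intro i hi
    have hik : (i : ℝ) ≤ (k : ℝ) := by exact_mod_cast hi
    have he : a i = (i : ℝ) * π / d := by rw [ha_def, hh_def]; ring
    rw [he, div_le_div_iff₀ hd0 two_pos]
    have h1 : (i : ℝ) * π ≤ (k : ℝ) * π := mul_le_mul_of_nonneg_right hik hπ.le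
    rw [hd_def]; nlinarith
  have ha_pos : ∀ i : ℕ, 1 ≤ i → 0 < a i := by
    intro i hi
    have : (0:ℝ) < (i:ℝ) := by exact_mod_cast Nat.lt_of_lt_of_le Nat.zero_lt_one hi
    exact mul_pos this hh0
  have ha_mono : ∀ i i' : ℕ, i ≤ i' → a i ≤ a i' := by
    intro i i' hi
    have : (i:ℝ) ≤ (i':ℝ) := by exact_mod_cast hi
    exact mul_le_mul_of_nonneg_right this hh0.le
  have ha_succ : ∀ i : ℕ, a (i+1) - a i = h := by
    intro i; rw [ha_def]; push_cast; ring
  -- integrability on subintervals of [0, π/2]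
  have hInt : ∀ u v : ℝ, 0 ≤ u → u ≤ v → v ≤ π / 2 →
      IntervalIntegrable f volume u v := by
    intro u v hu huv hv
    refine (intInt_f (hu.trans huv) hv).mono_set ?_
    rw [Set.uIcc_of_le huv, Set.uIcc_of_le (hu.trans huv)]
    exact Set.Icc_subset_Icc hu le_rfl
  have haInt : ∀ i i' : ℕ, i ≤ i' → i' ≤ k → IntervalIntegrable f volume (a i) (a i') := by
    intro i i' hii hik
    refine hInt (a i) (a i') ?_ (ha_mono _ _ hii) (ha_le _ hik)
    rw [ha_def]; positivity
  set S : ℝ := ∑ i ∈ Finset.Icc 1 j, f (a i) with hS_def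
  set I : ℝ := ∫ s in (0:ℝ)..(a j), f s with hI_def
  have hjlek : j ≤ k := by omega
  -- telescoping: I = sum of pieces
  have htel1 : ∑ i ∈ Finset.range j, ∫ s in (a i)..(a (i+1)), f s = I := by
    have := intervalIntegral.sum_integral_adjacent_intervals
      (a := a) (n := j) (f := f) (μ := volume)
      (fun i hi => haInt i (i+1) (Nat.le_succ i) (by omega))
    rw [hI_def, ← ha0]; exact this
  have htel2 : ∑ i ∈ Finset.range j, ∫ s in (a (i+1))..(a (i+2)), f s
      = ∫ s in (a 1)..(a (j+1)), f s := by
    exact intervalIntegral.sum_integral_adjacent_intervals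
      (a := fun i => a (i+1)) (n := j) (f := f) (μ := volume)
      (fun i hi => haInt (i+1) (i+2) (by omega) (by omega))
  have hS_range : S = ∑ i ∈ Finset.range j, f (a (i+1)) := by
    rw [hS_def, ← Finset.Ico_add_one_right_eq_Icc, Finset.sum_Ico_eq_sum_range]
    simp [add_comm]
  -- lower bound: I ≤ h * S
  have hlow : I ≤ h * S := by
    rw [← htel1, hS_range, Finset.mul_sum]
    refine Finset.sum_le_sum ?_
    intro i hi
    have hi' : i + 1 ≤ k := by have := Finset.mem_range.mp hi; omega
    have hb := int_le_const (ha_mono i (i+1) (Nat.le_succ i))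
      (haInt i (i+1) (Nat.le_succ i) hi') (c := f (a (i+1))) ?_
    · calc ∫ s in (a i)..(a (i+1)), f s ≤ (a (i+1) - a i) * f (a (i+1)) := hb
        _ = h * f (a (i+1)) := by rw [ha_succ]
    · intro s hs
      exact f_mono (lt_of_le_of_lt (by rw [ha_def]; positivity) hs.1) hs.2
        (le_trans (ha_mono (i+1) k hi') (ha_le k le_rfl))
  -- upper bound: h * S ≤ ∫_{a 1}^{a (j+1)} f
  have hup : h * S ≤ ∫ s in (a 1)..(a (j+1)), f s := by
    rw [← htel2, hS_range, Finset.mul_sum]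
    refine Finset.sum_le_sum ?_
    intro i hi
    have hi' : i + 2 ≤ k + 1 := by have := Finset.mem_range.mp hi; omega
    have hi2 : i + 2 ≤ j + 1 := by have := Finset.mem_range.mp hi; omega
    have hik2 : a (i+2) ≤ π / 2 := le_trans (ha_mono (i+2) (j+1) hi2) (ha_le (j+1) hjk')
    have hb := const_le_int (ha_mono (i+1) (i+2) (by omega))
      (hInt (a (i+1)) (a (i+2)) (by rw [ha_def]; positivity)
        (ha_mono (i+1) (i+2) (by omega)) hik2) (c := f (a (i+1))) ?_
    · calc h * f (a (i+1)) = (a (i+2) - a (i+1)) * f (a (i+1)) := by rw [ha_succ]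
        _ ≤ ∫ s in (a (i+1))..(a (i+2)), f s := hb
    · intro s hs
      exact f_mono (ha_pos (i+1) (by omega)) hs.1.le (hs.2.trans hik2)
  -- split ∫_{a 1}^{a (j+1)} = I + T - B
  have hsplit1 : (∫ s in (a 0)..(a 1), f s) + ∫ s in (a 1)..(a (j+1)), f s
      = ∫ s in (a 0)..(a (j+1)), f s :=
    intervalIntegral.integral_add_adjacent_intervals
      (haInt 0 1 (by omega) (by omega)) (haInt 1 (j+1) (by omega) hjk')
  have hsplit2 : (∫ s in (a 0)..(a j), f s) + ∫ s in (a j)..(a (j+1)), f s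
      = ∫ s in (a 0)..(a (j+1)), f s :=
    intervalIntegral.integral_add_adjacent_intervals
      (haInt 0 j (by omega) hjlek) (haInt j (j+1) (by omega) hjk')
  set T : ℝ := ∫ s in (a j)..(a (j+1)), f s with hT_def
  set B : ℝ := ∫ s in (a 0)..(a 1), f s with hB_def
  have hIB : ∫ s in (a 1)..(a (j+1)), f s = I + T - B := by
    have hI0 : I = ∫ s in (a 0)..(a j), f s := by rw [hI_def, ha0]
    rw [hI0]; linarith [hsplit1, hsplit2]
  -- T ≤ h * log 2
  have hT : T ≤ h * Real.log 2 := by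
    have hb := int_le_const (ha_mono j (j+1) (by omega))
      (haInt j (j+1) (by omega) hjk') (c := Real.log 2) ?_
    · rw [hT_def]
      calc ∫ s in (a j)..(a (j+1)), f s ≤ (a (j+1) - a j) * Real.log 2 := hb
        _ = h * Real.log 2 := by rw [ha_succ]
    · intro s hs
      refine f_le_log_two (lt_of_le_of_lt (by rw [ha_def]; positivity) hs.1) ?_
      have := hs.2.trans (ha_le (j+1) hjk')
      linarith
  -- B ≥ h log h - h
  have hB : h * Real.log h - h ≤ B := by
    have ha1 : a 1 = h := by rw [ha_def]; push_cast; ring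
    have hm := int_mono_Ioc (a := (0:ℝ)) (b := h) hh0.le
      (intInt_log0 hh0.le) (hInt 0 h le_rfl hh0.le hhalf) ?_
    · rw [hB_def, ha0, ha1]
      calc h * Real.log h - h = ∫ s in (0:ℝ)..h, Real.log s := (integral_log0 hh0.le).symm
        _ ≤ ∫ s in (0:ℝ)..h, f s := hm
    · intro s hs
      exact f_lower hs.1 (hs.2.trans hhalf)
  -- product = exp S
  have hPS : ∏ i ∈ Finset.Icc 1 j, 2 * Real.sin (i * π / d) = Real.exp S := by
    rw [hS_def, Real.exp_sum]
    refine Finset.prod_congr rfl ?_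
    intro i hi
    have hi1 : 1 ≤ i := (Finset.mem_Icc.mp hi).1
    have hij : i ≤ j := (Finset.mem_Icc.mp hi).2
    have hai : a i = (i:ℝ) * π / d := by rw [ha_def, hh_def]; ring
    have hpos : 0 < a i := ha_pos i hi1
    have hle : a i ≤ π / 2 := le_trans (ha_mono i k (le_trans hij hjlek)) (ha_le k le_rfl)
    rw [f_eq hpos.le (by linarith), Real.exp_log (two_sin_pos hpos (by linarith)), hai]
  -- Lob relation
  have haj : a j = π * (j:ℝ) / d := by rw [ha_def, hh_def]; ring
  have hLob : Lob (π * (j:ℝ) / d) = -I := by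
    rw [hI_def, haj, Lob]; rfl
  have hLobI : -(d / π) * Lob (π * (j:ℝ) / d) = d / π * I := by rw [hLob]; ring
  -- convert h-scaled bounds
  have hdh : d / π * I = I / h := by
    rw [hh_def]; field_simp
  have hlow' : d / π * I ≤ S := by
    rw [hdh, div_le_iff₀ hh0]; linarith [hlow]
  have hlog_d : 1 ≤ Real.log d := by
    have he : Real.exp 1 ≤ d := by
      have := Real.exp_one_lt_d9; linarith
    calc (1:ℝ) = Real.log (Real.exp 1) := (Real.log_exp 1).symm
      _ ≤ Real.log d := Real.log_le_log (Real.exp_pos 1) he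
  have hlogd0 : 0 ≤ Real.log d := by linarith
  have hup' : S ≤ d / π * I + 2 * Real.log d := by
    have h1 : h * S ≤ I + h * Real.log 2 - (h * Real.log h - h) := by
      rw [hIB] at hup; linarith
    have h2 : S ≤ I / h + Real.log 2 - Real.log h + 1 := by
      have hexp : h * (I / h + Real.log 2 - Real.log h + 1)
          = I + h * Real.log 2 - (h * Real.log h - h) := by
        field_simp; ring
      rw [← mul_le_mul_iff_right₀ hh0, hexp]; exact h1
    have hlogh : Real.log h = Real.log π - Real.log d := by
      rw [hh_def, Real.log_div hπ.ne' hd0.ne']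
    have hlog2pi : Real.log 2 ≤ Real.log π := Real.log_le_log two_pos (by linarith [Real.pi_gt_three])
    rw [hdh]
    rw [hlogh] at h2
    linarith
  rw [hPS, hLobI]
  constructor
  · rw [Real.exp_le_exp]; linarith
  · rw [Real.exp_le_exp]; linarith
end

section
/- There exists a constant C > 0 such that for every integer k ≥ 2 and every integer j with 1 ≤ j ≤ k−1, setting d = 2k+1, the evaluated quantum binomial coefficient satisfies exp(−(d/π)·(Λ(πk/d) − Λ(πj/d) − Λ(π(k−j)/d)) − 3C·log d) ≤ [k choose j]_d ≤ exp(−(d/π)·(Λ(πk/d) − Λ(πj/d) − Λ(π(k−j)/d)) + 3C·log d). -/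
open Real Filter Finset
open intervalIntegral MeasureTheory

/-- Evaluated quantum integer `[n]_d = sin(nπ/d)/sin(π/d)`. -/
noncomputable def qInt (d n : ℕ) : ℝ := Real.sin (n * Real.pi / d) / Real.sin (Real.pi / d)

/-- Evaluated quantum factorial `[n]_d! = ∏_{i=1}^n [i]_d`. -/
noncomputable def qFact (d n : ℕ) : ℝ := ∏ i ∈ Finset.Icc 1 n, qInt d i

/-- Evaluated quantum binomial `[k choose j]_d = [k]_d! / ([j]_d! [k−j]_d!)`. -/
noncomputable def qBinom (d k j : ℕ) : ℝ := qFact d k / (qFact d j * qFact d (k - j))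

noncomputable def f2s (s : ℝ) : ℝ := Real.log (2 * Real.sin s)

-- |log s| ≤ 2 s^(-1/2) on (0, π/2]
lemma abs_log_le (s : ℝ) (h0 : 0 < s) (h2 : s ≤ Real.pi / 2) :
    |Real.log s| ≤ 2 * s ^ (-(1/2) : ℝ) := by
  have hrp : (0:ℝ) < s ^ (-(1/2) : ℝ) := Real.rpow_pos_of_pos h0 _
  have hlog : Real.log (s ^ (-(1/2) : ℝ)) = (-(1/2)) * Real.log s := Real.log_rpow h0 _
  rcases le_total s 1 with hs1 | hs1
  · have : -Real.log s = 2 * Real.log (s ^ (-(1/2) : ℝ)) := by rw [hlog]; ring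
    have h1 : Real.log (s ^ (-(1/2) : ℝ)) ≤ s ^ (-(1/2) : ℝ) - 1 :=
      Real.log_le_sub_one_of_pos hrp
    have hls : Real.log s ≤ 0 := Real.log_nonpos h0.le hs1
    rw [abs_of_nonpos hls, this]
    nlinarith
  · have hls : 0 ≤ Real.log s := Real.log_nonneg hs1
    rw [abs_of_nonneg hls]
    have h1 : Real.log s ≤ s - 1 := Real.log_le_sub_one_of_pos h0
    have hs4 : s ≤ 4 := h2.trans (by nlinarith [Real.pi_lt_d2])
    have : (1:ℝ) ≤ 2 * s ^ (-(1/2) : ℝ) := by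
      have h4 : s ^ (-(1/2) : ℝ) ≥ 4 ^ (-(1/2) : ℝ) := by
        apply Real.rpow_le_rpow_of_nonpos h0 hs4 (by norm_num)
      have : (4:ℝ) ^ (-(1/2) : ℝ) = 1/2 := by
        rw [Real.rpow_neg (by norm_num)]
        rw [show (4:ℝ) = 2^(2:ℕ) by norm_num, ← Real.rpow_natCast (2:ℝ) 2,
          ← Real.rpow_mul (by norm_num)]
        norm_num
      linarith
    have : Real.log s ≤ s - 1 := h1
    nlinarith [Real.pi_lt_d2, Real.log_le_sub_one_of_pos h0]

lemma sin_pos' {s : ℝ} (h0 : 0 < s) (h2 : s ≤ Real.pi / 2) : 0 < Real.sin s :=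
  Real.sin_pos_of_pos_of_lt_pi h0 (lt_of_le_of_lt h2 (by linarith [Real.pi_pos]))

-- bounds for f2s
lemma f2s_le {s : ℝ} (h0 : 0 < s) (h2 : s ≤ Real.pi / 2) :
    f2s s ≤ Real.log 2 + Real.log s := by
  rw [f2s, ← Real.log_mul (by norm_num) h0.ne']
  exact Real.log_le_log (mul_pos two_pos (sin_pos' h0 h2)) (by nlinarith [Real.sin_le h0.le])

lemma le_f2s {s : ℝ} (h0 : 0 < s) (h2 : s ≤ Real.pi / 2) :
    Real.log (4 / Real.pi) + Real.log s ≤ f2s s := by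
  rw [f2s, ← Real.log_mul (by positivity) h0.ne']
  apply Real.log_le_log (by positivity)
  have := Real.mul_le_sin h0.le h2
  have hπ := Real.pi_pos
  rw [div_mul_eq_mul_div, div_le_iff₀ hπ] at *
  nlinarith

lemma abs_f2s_le {s : ℝ} (h0 : 0 < s) (h2 : s ≤ Real.pi / 2) :
    |f2s s| ≤ 2 * s ^ (-(1/2) : ℝ) + 1 := by
  have h1 := f2s_le h0 h2
  have h2' := le_f2s h0 h2
  have hl := abs_log_le s h0 h2
  have hlog2 : Real.log 2 ≤ 1 := by
    have := Real.log_le_sub_one_of_pos (by norm_num : (0:ℝ) < 2); linarith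
  have hlog4π : 0 ≤ Real.log (4 / Real.pi) := by
    apply Real.log_nonneg
    rw [le_div_iff₀ Real.pi_pos]
    nlinarith [Real.pi_lt_d2]
  rw [abs_le] at *
  constructor <;> nlinarith

lemma intF2s {b : ℝ} (hb0 : 0 ≤ b) (hb : b ≤ Real.pi / 2) :
    IntervalIntegrable f2s volume 0 b := by
  rw [intervalIntegrable_iff_integrableOn_Ioc_of_le hb0]
  have hg : IntegrableOn (fun s : ℝ => 2 * s ^ (-(1/2) : ℝ) + 1) (Set.Ioc 0 b) volume := by
    apply Integrable.add
    · have : IntervalIntegrable (fun s : ℝ => s ^ (-(1/2) : ℝ)) volume 0 b :=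
        intervalIntegral.intervalIntegrable_rpow' (by norm_num)
      rw [intervalIntegrable_iff_integrableOn_Ioc_of_le hb0] at this
      exact this.const_mul 2
    · exact (integrableOn_const measure_Ioc_lt_top.ne).mono_set Set.Subset.rfl
  apply Integrable.mono hg
  · apply Measurable.aestronglyMeasurable
    exact Real.measurable_log.comp (measurable_const.mul Real.measurable_sin)
  · filter_upwards [ae_restrict_mem measurableSet_Ioc] with s hs
    rw [Real.norm_eq_abs, Real.norm_eq_abs]
    have h := abs_f2s_le hs.1 (hs.2.trans hb)
    have : 0 < s ^ (-(1/2) : ℝ) := Real.rpow_pos_of_pos hs.1 _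
    calc |f2s s| ≤ 2 * s ^ (-(1/2) : ℝ) + 1 := h
    _ ≤ |2 * s ^ (-(1/2) : ℝ) + 1| := le_abs_self _

lemma intLog {b : ℝ} (hb0 : 0 ≤ b) (hb : b ≤ Real.pi / 2) :
    IntervalIntegrable Real.log volume 0 b := by
  rw [intervalIntegrable_iff_integrableOn_Ioc_of_le hb0]
  have hg : IntegrableOn (fun s : ℝ => 2 * s ^ (-(1/2) : ℝ)) (Set.Ioc 0 b) volume := by
    have : IntervalIntegrable (fun s : ℝ => s ^ (-(1/2) : ℝ)) volume 0 b :=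
      intervalIntegral.intervalIntegrable_rpow' (by norm_num)
    rw [intervalIntegrable_iff_integrableOn_Ioc_of_le hb0] at this
    exact this.const_mul 2
  apply Integrable.mono hg Real.measurable_log.aestronglyMeasurable
  filter_upwards [ae_restrict_mem measurableSet_Ioc] with s hs
  rw [Real.norm_eq_abs, Real.norm_eq_abs]
  exact (abs_log_le s hs.1 (hs.2.trans hb)).trans (le_abs_self _)

lemma intLogVal {x : ℝ} (hx0 : 0 ≤ x) (hx : x ≤ Real.pi / 2) :
    ∫ s in (0:ℝ)..x, Real.log s = x * Real.log x - x := by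
  have h := intervalIntegral.integral_eq_sub_of_hasDeriv_right_of_le hx0
    (f := fun s => s * Real.log s - s) (f' := Real.log)
    ((Real.continuous_mul_log.sub continuous_id).continuousOn)
    (fun s hs => by
      refine HasDerivAt.hasDerivWithinAt ?_
      exact ((Real.hasDerivAt_mul_log (ne_of_gt hs.1)).sub (hasDerivAt_id' s)).congr_deriv (by ring))
    (intLog hx0 hx)
  rw [h]; simp

lemma f2s_mono {a b : ℝ} (ha : 0 < a) (hab : a ≤ b) (hb : b ≤ Real.pi / 2) :
    f2s a ≤ f2s b := by
  apply Real.log_le_log (mul_pos two_pos (sin_pos' ha (hab.trans hb)))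
  have hs := Real.strictMonoOn_sin
  have := hs.monotoneOn (by constructor <;> [linarith [Real.pi_pos]; linarith])
    (by constructor <;> [linarith [Real.pi_pos]; linarith]) hab
  linarith

lemma intF2s' {a b : ℝ} (ha : 0 ≤ a) (hab : a ≤ b) (hb : b ≤ Real.pi / 2) :
    IntervalIntegrable f2s volume a b :=
  (intF2s ha (hab.trans hb)).symm.trans (intF2s (ha.trans hab) hb)

lemma upperInt {a b : ℝ} (ha : 0 ≤ a) (hab : a ≤ b) (hb : b ≤ Real.pi / 2) :
    ∫ s in a..b, f2s s ≤ (b - a) * f2s b := by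
  rw [intervalIntegral.integral_of_le hab]
  have h := MeasureTheory.setIntegral_mono_on
    ((intervalIntegrable_iff_integrableOn_Ioc_of_le hab).1 (intF2s' ha hab hb))
    (integrableOn_const (C := f2s b) measure_Ioc_lt_top.ne)
    measurableSet_Ioc
    (fun s hs => f2s_mono (lt_of_le_of_lt ha hs.1) hs.2 hb)
  rw [MeasureTheory.setIntegral_const] at h
  rw [Real.volume_real_Ioc_of_le hab] at h
  simpa [smul_eq_mul] using h

lemma lowerInt {a b : ℝ} (ha : 0 < a) (hab : a ≤ b) (hb : b ≤ Real.pi / 2) :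
    (b - a) * f2s a ≤ ∫ s in a..b, f2s s := by
  rw [intervalIntegral.integral_of_le hab]
  have h := MeasureTheory.setIntegral_mono_on
    (integrableOn_const (C := f2s a) measure_Ioc_lt_top.ne)
    ((intervalIntegrable_iff_integrableOn_Ioc_of_le hab).1 (intF2s' ha.le hab hb))
    measurableSet_Ioc
    (fun s hs => f2s_mono ha hs.1.le (hs.2.trans hb))
  rw [MeasureTheory.setIntegral_const] at h
  rw [Real.volume_real_Ioc_of_le hab] at h
  simpa [smul_eq_mul] using h

-- lower bound for the first interval
lemma firstInt {c : ℝ} (hc : 0 < c) (h2 : c ≤ Real.pi / 2) :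
    c * Real.log c + c * Real.log (4 / Real.pi) - c ≤ ∫ s in (0:ℝ)..c, f2s s := by
  have hle : ∀ s ∈ Set.Ioc (0:ℝ) c, Real.log (4 / Real.pi) + Real.log s ≤ f2s s := by
    intro s hs
    have hs0 : 0 < s := hs.1
    rw [f2s, ← Real.log_mul (by positivity) hs.1.ne']
    apply Real.log_le_log (by have := Real.pi_pos; positivity)
    have := Real.mul_le_sin hs.1.le (hs.2.trans h2)
    have hπ := Real.pi_pos
    rw [div_mul_eq_mul_div, div_le_iff₀ hπ] at *
    nlinarith
  have hint : IntegrableOn (fun s => Real.log (4/Real.pi) + Real.log s) (Set.Ioc 0 c) volume := by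
    apply Integrable.add
    · exact (integrableOn_const measure_Ioc_lt_top.ne)
    · exact (intervalIntegrable_iff_integrableOn_Ioc_of_le hc.le).1 (intLog hc.le h2)
  have h := MeasureTheory.setIntegral_mono_on hint
    ((intervalIntegrable_iff_integrableOn_Ioc_of_le hc.le).1 (intF2s hc.le h2))
    measurableSet_Ioc hle
  rw [MeasureTheory.integral_add ((integrableOn_const measure_Ioc_lt_top.ne :
      IntegrableOn (fun _ => Real.log (4/Real.pi)) (Set.Ioc 0 c) volume))
    ((intervalIntegrable_iff_integrableOn_Ioc_of_le hc.le).1 (intLog hc.le h2))] at h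
  rw [MeasureTheory.setIntegral_const, Real.volume_real_Ioc_of_le hc.le,
    ← intervalIntegral.integral_of_le hc.le,
    intLogVal hc.le h2] at h
  rw [intervalIntegral.integral_of_le hc.le]
  calc c * Real.log c + c * Real.log (4 / Real.pi) - c
      = (c - 0) • Real.log (4 / Real.pi) + (c * Real.log c - c) := by simp [smul_eq_mul]; ring
  _ ≤ _ := h

lemma keyEst (c : ℝ) (hc : 0 < c) (k : ℕ) (hkc : (k : ℝ) * c ≤ Real.pi / 2) :
    ∀ n : ℕ, 1 ≤ n → n ≤ k →
      (∫ s in (0:ℝ)..(n * c), f2s s) ≤ c * (∑ i ∈ Finset.Icc 1 n, f2s (i * c)) ∧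
      c * (∑ i ∈ Finset.Icc 1 n, f2s (i * c)) ≤
        (∫ s in (0:ℝ)..(n * c), f2s s) + c * f2s (n * c) - ∫ s in (0:ℝ)..c, f2s s := by
  intro n hn
  induction n, hn using Nat.le_induction with
  | base =>
    intro h1k
    have h1c : (1:ℝ) * c ≤ Real.pi / 2 := by
      have : (1:ℝ) ≤ (k:ℝ) := by exact_mod_cast h1k
      nlinarith
    have hu := upperInt (a := 0) (b := c) (le_refl 0) hc.le (by linarith)
    simp only [Finset.Icc_self, Finset.sum_singleton, Nat.cast_one, one_mul]
    constructor
    · linarith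
    · linarith
  | succ n hn ih =>
    intro hnk
    have hnk' : n ≤ k := le_of_lt hnk
    have hn1R : (1:ℝ) ≤ (n:ℝ) := by exact_mod_cast hn
    have hcast : ((n:ℝ)+1) = ((n+1 : ℕ) : ℝ) := by push_cast; ring
    have hnc_pos : 0 < (n:ℝ) * c := by nlinarith
    have hsucc_le : ((n:ℝ)+1) * c ≤ Real.pi / 2 := by
      have : ((n:ℝ)+1) ≤ (k:ℝ) := by exact_mod_cast hnk
      nlinarith
    have hn_le : (n:ℝ) * c ≤ ((n:ℝ)+1) * c := by nlinarith
    have ihs := ih hnk'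
    have hsum : (∑ i ∈ Finset.Icc 1 (n+1), f2s (i * c))
        = (∑ i ∈ Finset.Icc 1 n, f2s (i * c)) + f2s (((n:ℝ)+1) * c) := by
      rw [Finset.sum_Icc_succ_top (by omega : 1 ≤ n + 1)]
      rw [Nat.cast_add, Nat.cast_one]
    have hadj : (∫ s in (0:ℝ)..(((n:ℝ)+1) * c), f2s s)
        = (∫ s in (0:ℝ)..((n:ℝ) * c), f2s s) + ∫ s in ((n:ℝ)*c)..(((n:ℝ)+1)*c), f2s s := by
      rw [intervalIntegral.integral_add_adjacent_intervals
        (intF2s (by positivity) (hn_le.trans hsucc_le))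
        (intF2s' (by positivity) hn_le hsucc_le)]
    have hub := upperInt (le_of_lt hnc_pos) hn_le hsucc_le
    have hlb := lowerInt hnc_pos hn_le hsucc_le
    have hdiff : (((n:ℝ)+1)*c - (n:ℝ)*c) = c := by ring
    rw [hdiff] at hub hlb
    push_cast
    rw [hsum, hadj]
    constructor
    · nlinarith [ihs.1]
    · nlinarith [ihs.2]

lemma sin_ic_pos (k i : ℕ) (hi1 : 1 ≤ i) (hik : i ≤ k) :
    0 < Real.sin ((i : ℝ) * Real.pi / (2 * k + 1)) := by
  have hπ := Real.pi_pos
  have hk : (1:ℝ) ≤ (k:ℝ) := by exact_mod_cast hi1.trans hik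
  have hi1R : (1:ℝ) ≤ (i:ℝ) := by exact_mod_cast hi1
  have hikR : (i:ℝ) ≤ (k:ℝ) := by exact_mod_cast hik
  apply Real.sin_pos_of_pos_of_lt_pi
  · positivity
  · rw [div_lt_iff₀ (by positivity)]; nlinarith

lemma qFact_eq (k n : ℕ) (hn : n ≤ k) (hk : 1 ≤ k) :
    qFact (2 * k + 1) n =
      Real.exp ((∑ i ∈ Finset.Icc 1 n, Real.log (Real.sin ((i:ℝ) * Real.pi / (2 * k + 1))))
        - n * Real.log (Real.sin (Real.pi / (2 * k + 1)))) := by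
  have hc : (0:ℝ) < Real.sin (Real.pi / (2 * k + 1)) := by
    have := sin_ic_pos k 1 le_rfl hk; simpa using this
  rw [sub_eq_add_neg, Real.exp_add, ← Finset.sum_attach (Finset.Icc 1 n)
    (fun i => Real.log (Real.sin ((i:ℝ) * Real.pi / (2*k+1)))), Real.exp_sum]
  rw [qFact, ← Finset.prod_attach (Finset.Icc 1 n) (fun i => qInt (2*k+1) i)]
  have hcard : (Finset.Icc 1 n).card = n := by simp
  rw [show Real.exp (-(n * Real.log (Real.sin (Real.pi / (2 * k + 1)))))
      = ∏ _i ∈ (Finset.Icc 1 n).attach, (Real.sin (Real.pi / (2 * k + 1)))⁻¹ by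
    rw [Finset.prod_const, Finset.card_attach, hcard,
      show -((n:ℝ) * Real.log (Real.sin (Real.pi / (2 * (k:ℝ) + 1))))
        = (n:ℕ) * (-Real.log (Real.sin (Real.pi / (2 * (k:ℝ) + 1)))) by push_cast; ring,
      Real.exp_nat_mul, Real.exp_neg, Real.exp_log hc]]
  rw [← Finset.prod_mul_distrib]
  apply Finset.prod_congr rfl
  intro i _
  have hi1 : 1 ≤ (i:ℕ) := (Finset.mem_Icc.1 i.2).1
  have hik : (i:ℕ) ≤ k := le_trans (Finset.mem_Icc.1 i.2).2 hn
  have hs := sin_ic_pos k i hi1 hik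
  rw [Real.exp_log (by push_cast; exact hs)]
  rw [qInt, div_eq_mul_inv]
  push_cast
  ring_nf

lemma lob_eq {x : ℝ} (hx0 : 0 ≤ x) (hx : x ≤ Real.pi / 2) :
    Lob x = -∫ s in (0:ℝ)..x, f2s s := by
  rw [Lob]
  congr 1
  apply intervalIntegral.integral_congr
  intro s hs
  rw [Set.uIcc_of_le hx0] at hs
  have h1 : 0 ≤ Real.sin s :=
    Real.sin_nonneg_of_nonneg_of_le_pi hs.1 (le_trans (hs.2.trans hx) (by linarith [Real.pi_pos]))
  simp only [f2s]
  rw [abs_of_nonneg (by linarith : (0:ℝ) ≤ 2 * Real.sin s)]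

set_option maxHeartbeats 2000000 in
/-- There is a constant `C > 0` such that for every `k ≥ 2` and `1 ≤ j ≤ k − 1`, with
`d = 2k+1`, the evaluated quantum binomial `[k choose j]_d` is bounded between
`exp(−(d/π)(Λ(πk/d) − Λ(πj/d) − Λ(π(k−j)/d)) ∓ 3C log d)`. -/
theorem stmt_1 :
    ∃ C : ℝ, 0 < C ∧
      ∀ k j : ℕ, 2 ≤ k → 1 ≤ j → j ≤ k - 1 →
        Real.exp (-((2 * k + 1 : ℝ) / Real.pi) *
              (Lob (Real.pi * k / (2 * k + 1)) - Lob (Real.pi * j / (2 * k + 1))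
                - Lob (Real.pi * (k - j : ℕ) / (2 * k + 1)))
            - 3 * C * Real.log (2 * k + 1))
          ≤ qBinom (2 * k + 1) k j ∧
        qBinom (2 * k + 1) k j
          ≤ Real.exp (-((2 * k + 1 : ℝ) / Real.pi) *
              (Lob (Real.pi * k / (2 * k + 1)) - Lob (Real.pi * j / (2 * k + 1))
                - Lob (Real.pi * (k - j : ℕ) / (2 * k + 1)))
            + 3 * C * Real.log (2 * k + 1)) := by
  refine ⟨2, by norm_num, ?_⟩
  intro k j hk hj1 hj2
  have hπ := Real.pi_pos
  have hjklt : j ≤ k := by omega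
  have hkj1 : 1 ≤ k - j := by omega
  have hkjk : k - j ≤ k := by omega
  have hK2 : (2:ℝ) ≤ (k:ℝ) := by exact_mod_cast hk
  have hD0 : (0:ℝ) < 2 * (k:ℝ) + 1 := by linarith
  set c : ℝ := Real.pi / (2 * (k:ℝ) + 1) with hcdef
  have hc : 0 < c := by rw [hcdef]; positivity
  have hkc : (k:ℝ) * c ≤ Real.pi / 2 := by
    rw [hcdef, mul_div_assoc']
    rw [div_le_div_iff₀ hD0 (by norm_num)]
    nlinarith
  have hc2 : c ≤ Real.pi / 2 := by
    calc c = 1 * c := (one_mul c).symm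
    _ ≤ (k:ℝ) * c := by nlinarith
    _ ≤ _ := hkc
  have hlogD : 1 ≤ Real.log (2 * (k:ℝ) + 1) := by
    have he : Real.exp 1 ≤ 2 * (k:ℝ) + 1 := by nlinarith [Real.exp_one_lt_d9]
    calc (1:ℝ) = Real.log (Real.exp 1) := (Real.log_exp 1).symm
    _ ≤ _ := Real.log_le_log (Real.exp_pos 1) he
  set F : ℕ → ℝ := fun n => ∑ i ∈ Finset.Icc 1 n, f2s ((i:ℝ) * c) with hFdef
  set S : ℕ → ℝ := fun n => ∑ i ∈ Finset.Icc 1 n, Real.log (Real.sin ((i:ℝ) * c)) with hSdef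
  set I : ℕ → ℝ := fun n => ∫ s in (0:ℝ)..((n:ℝ) * c), f2s s with hIdef
  have hcarg : ∀ n : ℕ, (n:ℝ) * Real.pi / (2 * (k:ℝ) + 1) = (n:ℝ) * c := by
    intro n; rw [hcdef]; ring
  -- F n = n log 2 + S n
  have hFS : ∀ n : ℕ, 1 ≤ n → n ≤ k → F n = n * Real.log 2 + S n := by
    intro n h1 h2'
    rw [hFdef, hSdef]
    simp only
    have hterm : ∀ i ∈ Finset.Icc 1 n, f2s ((i:ℝ) * c)
        = Real.log 2 + Real.log (Real.sin ((i:ℝ) * c)) := by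
      intro i hi
      obtain ⟨hi1, hin⟩ := Finset.mem_Icc.1 hi
      have hs : 0 < Real.sin ((i:ℝ) * c) := by
        have := sin_ic_pos k i hi1 (hin.trans h2')
        rwa [hcarg i] at this
      rw [show f2s ((i:ℝ)*c) = Real.log (2 * Real.sin ((i:ℝ)*c)) from rfl,
        Real.log_mul two_ne_zero hs.ne']
    rw [Finset.sum_congr rfl hterm, Finset.sum_add_distrib, Finset.sum_const,
      Nat.card_Icc]
    simp [nsmul_eq_mul]
  -- per-n error bounds
  have hE : ∀ n : ℕ, 1 ≤ n → n ≤ k →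
      0 ≤ c * F n - I n ∧ c * F n - I n ≤ 2 * c * Real.log (2 * (k:ℝ) + 1) := by
    intro n h1 h2'
    obtain ⟨hlow, hhigh⟩ := keyEst c hc k hkc n h1 h2'
    have hnc_pos : 0 < (n:ℝ) * c := by
      have : (1:ℝ) ≤ (n:ℝ) := by exact_mod_cast h1
      nlinarith
    have hnc_le : (n:ℝ) * c ≤ Real.pi / 2 := by
      have : (n:ℝ) ≤ (k:ℝ) := by exact_mod_cast h2'
      nlinarith
    have hf2s_le : f2s ((n:ℝ) * c) ≤ Real.log 2 := by
      rw [show f2s ((n:ℝ)*c) = Real.log (2 * Real.sin ((n:ℝ)*c)) from rfl]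
      apply Real.log_le_log (mul_pos two_pos (sin_pos' hnc_pos hnc_le))
      nlinarith [Real.sin_le_one ((n:ℝ)*c)]
    have hJ := firstInt hc hc2
    have hlogc : Real.log c + Real.log (4 / Real.pi)
        = Real.log 4 - Real.log (2 * (k:ℝ) + 1) := by
      rw [hcdef, Real.log_div (ne_of_gt hπ) (ne_of_gt hD0),
        Real.log_div (by norm_num) (ne_of_gt hπ)]
      ring
    have hlog24 : Real.log 2 - Real.log 4 ≤ 0 := by
      have := Real.log_le_log (by norm_num : (0:ℝ) < 2) (by norm_num : (2:ℝ) ≤ 4)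
      linarith
    constructor
    · rw [hFdef, hIdef]; simp only; linarith
    · have hx : c * F n - I n
          ≤ c * f2s ((n:ℝ)*c) - (c * Real.log c + c * Real.log (4/Real.pi) - c) := by
        rw [hFdef, hIdef]; simp only; linarith
      have h2 : c * Real.log c + c * Real.log (4/Real.pi)
          = c * (Real.log 4 - Real.log (2 * (k:ℝ) + 1)) := by
        rw [← hlogc]; ring
      nlinarith
  -- qBinom as exponential
  have hcast : ((k - j : ℕ) : ℝ) = (k:ℝ) - (j:ℝ) := by
    push_cast [Nat.cast_sub hjklt]; ring
  have hQ : qBinom (2*k+1) k j = Real.exp (S k - S j - S (k - j)) := by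
    rw [qBinom, qFact_eq k k le_rfl (by omega), qFact_eq k j hjklt (by omega),
      qFact_eq k (k-j) hkjk (by omega), ← Real.exp_add, ← Real.exp_sub,
      Real.exp_eq_exp]
    rw [hSdef]
    simp only [hcarg]
    rw [hcast]; ring
  -- Lob values
  have hLob : ∀ n : ℕ, 1 ≤ n → n ≤ k →
      Lob (Real.pi * (n:ℝ) / (2 * (k:ℝ) + 1)) = - I n := by
    intro n h1 h2'
    have harg : Real.pi * (n:ℝ) / (2 * (k:ℝ) + 1) = (n:ℝ) * c := by
      rw [hcdef]; ring
    rw [harg, hIdef]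
    apply lob_eq (by positivity)
    have : (n:ℝ) ≤ (k:ℝ) := by exact_mod_cast h2'
    nlinarith
  obtain ⟨hEk0, hEk1⟩ := hE k (by omega) le_rfl
  obtain ⟨hEj0, hEj1⟩ := hE j hj1 hjklt
  obtain ⟨hEkj0, hEkj1⟩ := hE (k-j) hkj1 hkjk
  rw [hQ, hLob k (by omega) le_rfl, hLob j hj1 hjklt, hLob (k-j) hkj1 hkjk,
    Real.exp_le_exp, Real.exp_le_exp]
  have hSF : S k - S j - S (k-j) = F k - F j - F (k-j) := by
    rw [hFS k (by omega) le_rfl, hFS j hj1 hjklt, hFS (k-j) hkj1 hkjk, hcast]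
    ring
  rw [hSF]
  have h1c : (2 * (k:ℝ) + 1) / Real.pi * c = 1 := by
    rw [hcdef, div_mul_div_comm, mul_comm Real.pi]
    exact div_self (by positivity)
  have hM : (-((2 * (k:ℝ) + 1) / Real.pi) * (- I k - (- I j) - (- I (k-j)))) * c
      = I k - I j - I (k-j) := by
    linear_combination (I k - I j - I (k - j)) * h1c
  have hclD : 0 ≤ c * Real.log (2 * (k:ℝ) + 1) := by nlinarith
  constructor
  · rw [← mul_le_mul_iff_of_pos_right hc]
    nlinarith
  · rw [← mul_le_mul_iff_of_pos_right hc]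
    nlinarith
end

section
/- Let L(α,β) = Λ(α) + Λ(π/2 − α + β) − Λ(π/2 + β). For every ε > 0 there exists δ > 0 such that L(α,β) < 2·Λ(π/4) + ε for all α ∈ [0, π/2] and all β with |β| < δ. -/
open Real Filter Set

/-- `L(α,β) = Λ(α) + Λ(π/2 − α + β) − Λ(π/2 + β)`. -/
noncomputable def Lfun (α β : ℝ) : ℝ :=
  Lob α + Lob (Real.pi / 2 - α + β) - Lob (Real.pi / 2 + β)

open MeasureTheory intervalIntegral Topology

namespace LobAux

noncomputable def lf : ℝ → ℝ := fun s => Real.log |2 * Real.sin s|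

lemma lf_meas : Measurable lf := by unfold lf; measurability

lemma lf_even (s : ℝ) : lf (-s) = lf s := by simp [lf, abs_mul]

lemma lf_pi_sub (s : ℝ) : lf (Real.pi - s) = lf s := by simp [lf, Real.sin_pi_sub]

lemma int_neg_log : IntervalIntegrable (fun x => -Real.log x) volume 0 1 := by
  apply intervalIntegrable_deriv_of_nonneg (g := fun x : ℝ => x - x * Real.log x)
  · exact (continuous_id.sub Real.continuous_mul_log).continuousOn
  · intro x hx
    simp only [min_self, min_eq_left, max_eq_right, zero_le_one] at hx
    have h := (hasDerivAt_id x).sub (Real.hasDerivAt_mul_log (ne_of_gt hx.1))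
    exact h.congr_deriv (by ring)
  · intro x hx
    simp only [min_eq_left, max_eq_right, zero_le_one] at hx
    simp only [neg_nonneg]
    exact Real.log_nonpos hx.1.le hx.2.le

lemma int_log01 : IntervalIntegrable Real.log volume 0 1 := by
  have h : Real.log = -fun x => -Real.log x := by funext x; simp
  rw [h]; exact int_neg_log.neg

lemma int_lf_01 : IntervalIntegrable lf volume 0 1 := by
  have hg : IntervalIntegrable (fun s => Real.log 2 - Real.log s) volume 0 1 :=
    (_root_.intervalIntegrable_const (c := Real.log 2)).sub int_log01
  apply hg.mono_fun' (lf_meas.aestronglyMeasurable.restrict)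
  have h1 : (1:ℝ) ≤ Real.pi / 2 := by
    have := Real.pi_gt_three; linarith
  filter_upwards [ae_restrict_mem measurableSet_uIoc] with x hx
  rw [Set.uIoc_of_le (by norm_num : (0:ℝ) ≤ 1)] at hx
  obtain ⟨hx0, hx1⟩ := hx
  have hsin_pos : 0 < Real.sin x :=
    Real.sin_pos_of_pos_of_lt_pi hx0 (by nlinarith [Real.pi_gt_three])
  have habs : |2 * Real.sin x| = 2 * Real.sin x := abs_of_pos (by linarith)
  have hle : Real.sin x ≤ x := (Real.sin_lt hx0).le
  have hge : x - x ^ 3 / 4 < Real.sin x := by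
    have := Real.sin_gt_sub_cube hx0; have : 0 < x ^ 3 := by positivity
    linarith
  have hx3 : x ^ 3 ≤ x := by
    have := pow_le_pow_of_le_one hx0.le hx1 (by norm_num : 1 ≤ 3)
    simpa using this
  have hge' : x / 2 ≤ Real.sin x := by nlinarith
  have hl2 : (0:ℝ) ≤ Real.log 2 := Real.log_nonneg one_le_two
  simp only [lf, habs, Real.norm_eq_abs]
  rw [abs_le]
  constructor
  · have : Real.log x ≤ Real.log (2 * Real.sin x) := by
      apply Real.log_le_log (by positivity); linarith
    linarith
  · have : Real.log (2 * Real.sin x) ≤ Real.log 2 := by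
      apply Real.log_le_log (by positivity)
      nlinarith
    have hlx : Real.log x ≤ 0 := Real.log_nonpos hx0.le hx1
    linarith

lemma int_lf_cont {a b : ℝ} (h : ∀ x ∈ Set.uIcc a b, Real.sin x ≠ 0) :
    IntervalIntegrable lf volume a b := by
  apply ContinuousOn.intervalIntegrable
  apply ContinuousOn.log
  · fun_prop
  · intro x hx
    simp only [abs_ne_zero]
    exact mul_ne_zero two_ne_zero (h x hx)

lemma int_lf_03 : IntervalIntegrable lf volume 0 3 := by
  refine int_lf_01.trans (int_lf_cont fun x hx => ?_)
  rw [Set.uIcc_of_le (by norm_num : (1:ℝ) ≤ 3)] at hx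
  exact (Real.sin_pos_of_pos_of_lt_pi (by linarith [hx.1])
    (by nlinarith [Real.pi_gt_d6, hx.2])).ne'

lemma int_lf_neg30 : IntervalIntegrable lf volume (-3) 0 := by
  have h := int_lf_03.comp_mul_left (c := -1) enorm_ne_top enorm_ne_top
  simp only [neg_one_mul, mul_neg, mul_zero, neg_zero] at h
  have : (fun x => lf (-x)) = lf := funext lf_even
  rw [this] at h
  have h2 := h.symm
  norm_num at h2
  exact h2

lemma int_lf_master : IntervalIntegrable lf volume (-3) (Real.pi + 3) := by
  have h1 : IntervalIntegrable lf volume (-3) 3 := int_lf_neg30.trans int_lf_03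
  have h2 : IntervalIntegrable lf volume (Real.pi - 3) (Real.pi + 3) := by
    have h := h1.comp_sub_left Real.pi
    have heq : (fun x => lf (Real.pi - x)) = lf := funext lf_pi_sub
    rw [heq] at h
    have h2 := h.symm
    rwa [sub_neg_eq_add] at h2
  refine h1.trans (h2.mono_set ?_)
  rw [Set.uIcc_of_le, Set.uIcc_of_le] <;> [skip; linarith [Real.pi_pos]; linarith [Real.pi_gt_three]]
  apply Set.Icc_subset_Icc <;> linarith [Real.pi_gt_three, Real.pi_lt_d2]

lemma int_lf {a b : ℝ} (ha : a ∈ Set.Icc (-3 : ℝ) (Real.pi + 3))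
    (hb : b ∈ Set.Icc (-3 : ℝ) (Real.pi + 3)) : IntervalIntegrable lf volume a b := by
  apply int_lf_master.mono_set
  rw [Set.uIcc_of_le (by linarith [Real.pi_pos] : (-3:ℝ) ≤ Real.pi + 3)]
  exact Set.uIcc_subset_Icc ha hb


lemma lob_eq (x : ℝ) : Lob x = -∫ s in (0:ℝ)..x, lf s := rfl

lemma lf_eq_of_sin_pos {x : ℝ} (hx : 0 < Real.sin x) : lf x = Real.log (2 * Real.sin x) := by
  rw [lf, abs_of_pos (by linarith)]

lemma lob_contOn : ContinuousOn Lob (Set.Icc (-3 : ℝ) (Real.pi + 3)) := by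
  have hle : (-3 : ℝ) ≤ Real.pi + 3 := by linarith [Real.pi_pos]
  have h0 : (0 : ℝ) ∈ Set.uIcc (-3 : ℝ) (Real.pi + 3) := by
    rw [Set.uIcc_of_le hle]; constructor <;> [norm_num; linarith [Real.pi_pos]]
  have h := intervalIntegral.continuousOn_primitive_interval' int_lf_master h0
  have h2 := h.neg
  rw [Set.uIcc_of_le hle] at h2
  exact h2

lemma lob_hasDeriv {x : ℝ} (hx : 0 < x) (hx' : x < Real.pi) :
    HasDerivAt Lob (-Real.log (2 * Real.sin x)) x := by
  have hsin : 0 < Real.sin x := Real.sin_pos_of_pos_of_lt_pi hx hx'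
  have hcont : ContinuousAt lf x := by
    apply ContinuousAt.log
    · exact (continuousAt_const.mul Real.continuous_sin.continuousAt).abs
    · simp only [abs_ne_zero]
      exact mul_ne_zero two_ne_zero hsin.ne'
  have hint : IntervalIntegrable lf volume 0 x :=
    int_lf (by constructor <;> [norm_num; linarith [Real.pi_pos]])
      (by constructor <;> [linarith; linarith])
  have hmeas : StronglyMeasurableAtFilter lf (𝓝 x) :=
    lf_meas.stronglyMeasurable.stronglyMeasurableAtFilter
  have h := (intervalIntegral.integral_hasDerivAt_right hint hmeas hcont).neg
  have heq : lf x = Real.log (2 * Real.sin x) := lf_eq_of_sin_pos hsin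
  rw [heq] at h
  exact h

noncomputable def F : ℝ → ℝ := fun a => Lob a + Lob (Real.pi / 2 - a)

lemma F_hasDeriv {a : ℝ} (ha : a ∈ Set.Ioo 0 (Real.pi / 2)) :
    HasDerivAt F (Real.log (2 * Real.cos a) - Real.log (2 * Real.sin a)) a := by
  have hpi := Real.pi_pos
  have h1 := lob_hasDeriv ha.1 (lt_trans ha.2 (by linarith))
  have h2 := lob_hasDeriv (x := Real.pi / 2 - a) (by linarith [ha.2]) (by linarith [ha.1])
  have hu : HasDerivAt (fun a : ℝ => Real.pi / 2 - a) (-1) a := by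
    simpa using (hasDerivAt_id a).const_sub (Real.pi / 2)
  have h2' := HasDerivAt.comp a h2 hu
  have h := h1.add h2'
  refine h.congr_deriv ?_
  simp only [Real.sin_pi_div_two_sub]
  ring

lemma F_contOn : ContinuousOn F (Set.Icc 0 (Real.pi / 2)) := by
  have hpi := Real.pi_pos
  have hsub : Set.Icc (0:ℝ) (Real.pi / 2) ⊆ Set.Icc (-3 : ℝ) (Real.pi + 3) := by
    apply Set.Icc_subset_Icc <;> linarith
  apply ContinuousOn.add (lob_contOn.mono hsub)
  apply ContinuousOn.comp lob_contOn (by fun_prop)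
  intro x hx
  simp only [Set.mem_Icc] at hx ⊢
  constructor <;> linarith [hx.1, hx.2]

lemma F_quarter : F (Real.pi / 4) = 2 * Lob (Real.pi / 4) := by
  rw [F, show Real.pi / 2 - Real.pi / 4 = Real.pi / 4 by ring]; ring

lemma F_le {α : ℝ} (hα : α ∈ Set.Icc 0 (Real.pi / 2)) : F α ≤ 2 * Lob (Real.pi / 4) := by
  have hpi := Real.pi_pos
  rw [← F_quarter]
  rcases le_total α (Real.pi / 4) with h | h
  · have hmono : MonotoneOn F (Set.Icc 0 (Real.pi / 4)) := by
      apply monotoneOn_of_deriv_nonneg (convex_Icc _ _)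
      · exact F_contOn.mono (Set.Icc_subset_Icc le_rfl (by linarith))
      · rw [interior_Icc]
        intro x hx
        exact (F_hasDeriv ⟨hx.1, by linarith [hx.2]⟩).differentiableAt.differentiableWithinAt
      · rw [interior_Icc]
        intro x hx
        have hx' : x ∈ Set.Ioo 0 (Real.pi / 2) := ⟨hx.1, by linarith [hx.2]⟩
        rw [(F_hasDeriv hx').deriv]
        have hsc : Real.sin x ≤ Real.cos x := by
          rw [← Real.sin_pi_div_two_sub]
          apply (Real.strictMonoOn_sin ⟨by linarith [hx.1], by linarith [hx.2]⟩
            ⟨by linarith [hx.2], by linarith [hx.1]⟩ (by linarith [hx.2])).le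
        have hsin : 0 < Real.sin x := Real.sin_pos_of_pos_of_lt_pi hx.1 (by linarith [hx.2])
        have := Real.log_le_log (by linarith) (by linarith : 2 * Real.sin x ≤ 2 * Real.cos x)
        linarith
    exact hmono ⟨hα.1, h⟩ ⟨by linarith, le_rfl⟩ h
  · have hanti : AntitoneOn F (Set.Icc (Real.pi / 4) (Real.pi / 2)) := by
      apply antitoneOn_of_deriv_nonpos (convex_Icc _ _)
      · exact F_contOn.mono (Set.Icc_subset_Icc (by linarith) le_rfl)
      · rw [interior_Icc]
        intro x hx
        exact (F_hasDeriv ⟨by linarith [hx.1], hx.2⟩).differentiableAt.differentiableWithinAt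
      · rw [interior_Icc]
        intro x hx
        have hx' : x ∈ Set.Ioo 0 (Real.pi / 2) := ⟨by linarith [hx.1], hx.2⟩
        rw [(F_hasDeriv hx').deriv]
        have hsc : Real.cos x ≤ Real.sin x := by
          rw [← Real.sin_pi_div_two_sub]
          apply (Real.strictMonoOn_sin ⟨by linarith [hx.2], by linarith [hx.1]⟩
            ⟨by linarith [hx.1], by linarith [hx.2]⟩ (by linarith [hx.1])).le
        have hcos : 0 < Real.cos x := Real.cos_pos_of_mem_Ioo ⟨by linarith [hx.1], hx.2⟩
        have := Real.log_le_log (by linarith) (by linarith : 2 * Real.cos x ≤ 2 * Real.sin x)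
        linarith
    exact hanti ⟨le_rfl, by linarith⟩ ⟨h, hα.2⟩ h


lemma mem_master {x : ℝ} (h1 : -3 ≤ x) (h2 : x ≤ Real.pi + 3) :
    x ∈ Set.Icc (-3 : ℝ) (Real.pi + 3) := ⟨h1, h2⟩

lemma J_zero : ∫ s in (0:ℝ)..(Real.pi / 2), lf s = 0 := by
  have hpi := Real.pi_pos
  set J := ∫ s in (0:ℝ)..(Real.pi / 2), lf s with hJ
  have hm0 := mem_master (x := 0) (by norm_num) (by linarith)
  have hmh := mem_master (x := Real.pi / 2) (by linarith) (by linarith)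
  have hmp := mem_master (x := Real.pi) (by linarith) (by linarith)
  have hJint : IntervalIntegrable lf volume 0 (Real.pi / 2) := int_lf hm0 hmh
  have hJint2 : IntervalIntegrable lf volume (Real.pi / 2) Real.pi := int_lf hmh hmp
  -- reflection: ∫_{π/2}^{π} lf = J
  have hrefl : ∫ s in (Real.pi / 2)..Real.pi, lf s = J := by
    have h := intervalIntegral.integral_comp_sub_left (a := 0) (b := Real.pi / 2) lf Real.pi
    simp only [lf_pi_sub, sub_zero] at h
    rw [show Real.pi - Real.pi / 2 = Real.pi / 2 by ring] at h
    exact h.symm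
  -- I = 2 J
  have hI : ∫ s in (0:ℝ)..Real.pi, lf s = 2 * J := by
    rw [← intervalIntegral.integral_add_adjacent_intervals hJint hJint2, hrefl]
    ring
  -- substitution u = 2 x
  have hhalf : ∫ x in (0:ℝ)..(Real.pi / 2), lf (2 * x) = J := by
    have h := intervalIntegral.integral_comp_mul_left (a := 0) (b := Real.pi / 2) lf
      (c := 2) two_ne_zero
    rw [mul_zero, show 2 * (Real.pi / 2) = Real.pi by ring, hI] at h
    rw [h]; norm_num; ring
  -- integrand identity a.e.
  have hcos_int : IntervalIntegrable (fun x => lf (Real.pi / 2 - x)) volume 0 (Real.pi / 2) := by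
    have h := hJint.comp_sub_left (Real.pi / 2)
    rw [sub_self, sub_zero] at h
    exact h.symm
  have hcosJ : ∫ x in (0:ℝ)..(Real.pi / 2), lf (Real.pi / 2 - x) = J := by
    have h := intervalIntegral.integral_comp_sub_left (a := 0) (b := Real.pi / 2) lf
      (Real.pi / 2)
    rw [sub_self, sub_zero] at h
    exact h
  have hsplit : ∫ x in (0:ℝ)..(Real.pi / 2), lf (2 * x)
      = J + ∫ x in (0:ℝ)..(Real.pi / 2), lf (Real.pi / 2 - x) := by
    rw [← intervalIntegral.integral_add hJint hcos_int]
    apply intervalIntegral.integral_congr_ae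
    have hns : ∀ᵐ x : ℝ, x ≠ Real.pi / 2 := by
      rw [ae_iff]
      have : {x : ℝ | ¬ x ≠ Real.pi / 2} = {Real.pi / 2} := by ext x; simp
      rw [this]
      exact measure_singleton _
    filter_upwards [hns] with x hx hmem
    rw [Set.uIoc_of_le (by linarith : (0:ℝ) ≤ Real.pi / 2)] at hmem
    have hsin : 0 < Real.sin x := Real.sin_pos_of_pos_of_lt_pi hmem.1 (by linarith [hmem.2])
    have hcos : 0 < Real.cos x := by
      apply Real.cos_pos_of_mem_Ioo
      constructor
      · linarith [hmem.1]
      · exact lt_of_le_of_ne hmem.2 hx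
    have hs2 : Real.sin (2 * x) = 2 * Real.sin x * Real.cos x := Real.sin_two_mul x
    simp only [lf, Real.sin_pi_div_two_sub, hs2]
    rw [show |2 * (2 * Real.sin x * Real.cos x)| = |2 * Real.sin x| * |2 * Real.cos x| by
      rw [← abs_mul]; ring_nf]
    rw [Real.log_mul (by positivity) (by positivity)]
  rw [hcosJ] at hsplit
  rw [hhalf] at hsplit
  linarith

lemma lob_half : Lob (Real.pi / 2) = 0 := by
  rw [lob_eq, J_zero, neg_zero]

end LobAux

open LobAux in
/-- For every `ε > 0` there is `δ > 0` such that `L(α,β) < 2Λ(π/4) + ε` for all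
`α ∈ [0, π/2]` and all `β` with `|β| < δ`. -/
theorem stmt_3 :
    ∀ ε : ℝ, 0 < ε → ∃ δ : ℝ, 0 < δ ∧
      ∀ α β : ℝ, α ∈ Set.Icc 0 (Real.pi / 2) → |β| < δ →
        Lfun α β < 2 * Lob (Real.pi / 4) + ε := by
  intro ε hε
  have hpi := Real.pi_pos
  have huc := isCompact_Icc.uniformContinuousOn_of_continuous lob_contOn
  rw [Metric.uniformContinuousOn_iff] at huc
  obtain ⟨δ₀, hδ₀, hδ⟩ := huc (ε / 2) (by linarith)
  refine ⟨min δ₀ 1, by positivity, ?_⟩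
  intro α β hα hβ
  have hβ1 : |β| < 1 := lt_of_lt_of_le hβ (min_le_right _ _)
  have hβδ : |β| < δ₀ := lt_of_lt_of_le hβ (min_le_left _ _)
  obtain ⟨hβl, hβu⟩ := abs_lt.mp hβ1
  obtain ⟨hα0, hα2⟩ := hα
  have hm1 : Real.pi / 2 - α + β ∈ Set.Icc (-3 : ℝ) (Real.pi + 3) := by
    constructor <;> linarith
  have hm2 : Real.pi / 2 - α ∈ Set.Icc (-3 : ℝ) (Real.pi + 3) := by
    constructor <;> linarith
  have hm3 : Real.pi / 2 + β ∈ Set.Icc (-3 : ℝ) (Real.pi + 3) := by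
    constructor <;> linarith
  have hm4 : Real.pi / 2 ∈ Set.Icc (-3 : ℝ) (Real.pi + 3) := by
    constructor <;> linarith
  have h1 := hδ _ hm1 _ hm2 (by
    rw [Real.dist_eq, show Real.pi / 2 - α + β - (Real.pi / 2 - α) = β by ring]
    exact hβδ)
  have h2 := hδ _ hm3 _ hm4 (by
    rw [Real.dist_eq, show Real.pi / 2 + β - Real.pi / 2 = β by ring]
    exact hβδ)
  rw [Real.dist_eq] at h1 h2
  obtain ⟨h1l, h1u⟩ := abs_lt.mp h1
  obtain ⟨h2l, h2u⟩ := abs_lt.mp h2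
  have hF := F_le ⟨hα0, hα2⟩
  rw [F] at hF
  have hh := lob_half
  rw [Lfun]
  rw [hh] at h2l h2u
  linarith
end

section
/- The function g(x) = Λ(x) + Λ(π/2 − x) on the interval [0, π/2] attains its maximum value 2·Λ(π/4) at x = π/4, and x = π/4 is the only point of [0, π/2] where this maximum is attained. -/
open Real Filter Set

open MeasureTheory intervalIntegral in
lemma lob_aux1 : IntegrableOn (fun s : ℝ => Real.log (π/2) - Real.log s) (Set.Ioc 0 (π/2)) := by
  have hpi := Real.pi_pos
  have hderiv : ∀ x ∈ Set.Ioo (0:ℝ) (π/2),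
      HasDerivAt (fun x : ℝ => x * Real.log (π/2) + x - x * Real.log x)
        (Real.log (π/2) - Real.log x) x := by
    intro x hx
    have h1 : HasDerivAt (fun x : ℝ => x * Real.log (π/2) + x) (Real.log (π/2) + 1) x := by
      simpa using! ((hasDerivAt_id' x).mul_const (Real.log (π/2))).add (hasDerivAt_id' x)
    have h2 := Real.hasDerivAt_mul_log hx.1.ne'
    refine (h1.sub h2).congr_deriv ?_
    ring
  apply intervalIntegral.integrableOn_deriv_of_nonneg _ hderiv
  · intro x hx
    have : Real.log x ≤ Real.log (π/2) := Real.log_le_log hx.1 hx.2.le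
    linarith
  · exact (((continuous_id.mul continuous_const).add continuous_id).sub
      Real.continuous_mul_log).continuousOn

open MeasureTheory intervalIntegral in
lemma lob_aux2 : IntegrableOn (fun s : ℝ => Real.log |2 * Real.sin s|) (Set.Ioc 0 (π/2)) := by
  have hpi := Real.pi_pos
  have hsin : IntegrableOn (fun s : ℝ => Real.log (Real.sin s)) (Set.Ioc 0 (π/2)) := by
    refine Integrable.mono' lob_aux1
      ((Real.measurable_log.comp Real.measurable_sin).aestronglyMeasurable) ?_
    rw [ae_restrict_iff' measurableSet_Ioc]
    refine Filter.Eventually.of_forall (fun x hx => ?_)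
    have hx0 : 0 < x := hx.1
    have hx2 : x ≤ π/2 := hx.2
    have hs0 : 0 < Real.sin x := Real.sin_pos_of_pos_of_lt_pi hx0 (by linarith)
    have hs1 : Real.sin x ≤ 1 := Real.sin_le_one x
    have hlow : 2/π * x ≤ Real.sin x := Real.mul_le_sin hx0.le hx2
    have hc : (0:ℝ) < 2/π * x := by positivity
    have h1 : Real.log (2/π * x) ≤ Real.log (Real.sin x) := Real.log_le_log hc hlow
    have h2 : Real.log (Real.sin x) ≤ 0 := Real.log_nonpos hs0.le hs1
    have h3 : Real.log (2/π * x) = -Real.log (π/2) + Real.log x := by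
      rw [Real.log_mul (by positivity) hx0.ne', show (2:ℝ)/π = (π/2)⁻¹ by rw [inv_div],
        Real.log_inv]
    rw [Real.norm_eq_abs, abs_of_nonpos h2]
    rw [h3] at h1
    linarith
  have hadd : IntegrableOn (fun s : ℝ => Real.log 2 + Real.log (Real.sin s))
      (Set.Ioc 0 (π/2)) := (integrableOn_const measure_Ioc_lt_top.ne).add hsin
  refine hadd.congr_fun (fun s hs => ?_) measurableSet_Ioc
  have hs0 : 0 < Real.sin s := Real.sin_pos_of_pos_of_lt_pi hs.1 (by linarith [hs.2])
  rw [abs_of_pos (by linarith), Real.log_mul two_ne_zero hs0.ne']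

open MeasureTheory intervalIntegral in
lemma lob_aux3 {a b : ℝ} (ha : a ∈ Set.Icc 0 (π/2)) (hb : b ∈ Set.Icc 0 (π/2)) :
    IntervalIntegrable (fun s : ℝ => Real.log |2 * Real.sin s|) volume a b := by
  rw [intervalIntegrable_iff]
  apply lob_aux2.mono_set
  rw [Set.uIoc]
  exact Set.Ioc_subset_Ioc (le_min ha.1 hb.1) (max_le ha.2 hb.2)

open MeasureTheory intervalIntegral in
lemma lob_key : ∀ x ∈ Set.Icc (0:ℝ) (π/2), x ≠ π/4 →
    Lob x + Lob (π/2 - x) < 2 * Lob (π/4) := by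
  intro x hx hne
  have hpi := Real.pi_pos
  set f : ℝ → ℝ := fun s => Real.log |2 * Real.sin s| with hfdef
  have h4 : (π/4 : ℝ) ∈ Set.Icc (0:ℝ) (π/2) := ⟨by linarith, by linarith⟩
  have hx' : (π/2 - x) ∈ Set.Icc (0:ℝ) (π/2) := ⟨by linarith [hx.2], by linarith [hx.1]⟩
  have hInt1 : IntervalIntegrable f volume 0 (π/4) := lob_aux3 ⟨le_refl 0, by linarith⟩ h4
  have hInt2 : IntervalIntegrable f volume (π/4) x := lob_aux3 h4 hx
  have hInt3 : IntervalIntegrable f volume (π/4) (π/2 - x) := lob_aux3 h4 hx'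
  have hInt4 : IntervalIntegrable (fun s => f (π/2 - s)) volume (π/4) x := by
    have h := (lob_aux3 hx' h4).comp_sub_left (π/2)
    rw [show π/2 - (π/2 - x) = x by ring, show π/2 - π/4 = π/4 by ring] at h
    exact h.symm
  have key : 2 * Lob (π/4) - (Lob x + Lob (π/2 - x))
      = ∫ s in (π/4)..x, (f s - f (π/2 - s)) := by
    have e1 : (∫ s in (0:ℝ)..(π/4), f s) + ∫ s in (π/4)..x, f s = ∫ s in (0:ℝ)..x, f s :=
      integral_add_adjacent_intervals hInt1 hInt2
    have e2 : (∫ s in (0:ℝ)..(π/4), f s) + ∫ s in (π/4)..(π/2 - x), f s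
        = ∫ s in (0:ℝ)..(π/2 - x), f s := integral_add_adjacent_intervals hInt1 hInt3
    have e3 : (∫ s in x..(π/4), f (π/2 - s)) = ∫ s in (π/4)..(π/2 - x), f s := by
      rw [intervalIntegral.integral_comp_sub_left f (π/2),
        show π/2 - π/4 = π/4 by ring]
    have e4 : (∫ s in (π/4)..x, f (π/2 - s)) = -∫ s in x..(π/4), f (π/2 - s) :=
      integral_symm x (π/4)
    rw [intervalIntegral.integral_sub hInt2 hInt4]
    simp only [Lob, ← hfdef]
    rw [← e1, ← e2, e4, e3]
    ring
  have hkey : 0 < ∫ s in (π/4)..x, (f s - f (π/2 - s)) := by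
    rcases lt_or_gt_of_ne hne with hlt | hgt
    · have hflip : (∫ s in (π/4)..x, (f s - f (π/2 - s)))
          = ∫ s in x..(π/4), (f (π/2 - s) - f s) := by
        rw [integral_symm x (π/4), ← intervalIntegral.integral_neg]
        congr 1; funext s; ring
      rw [hflip]
      apply intervalIntegral_pos_of_pos_on (hInt4.symm.sub hInt2.symm) _ hlt
      intro s hs
      have hs0 : 0 < s := lt_of_le_of_lt hx.1 hs.1
      have hs4 : s < π/4 := hs.2
      have hsin : 0 < Real.sin s := Real.sin_pos_of_pos_of_lt_pi hs0 (by linarith)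
      have hmono : Real.sin s < Real.sin (π/2 - s) := by
        apply Real.strictMonoOn_sin ⟨by linarith, by linarith⟩ ⟨by linarith, by linarith⟩
        linarith
      have hcos : 0 < Real.sin (π/2 - s) := lt_trans hsin hmono
      have : f s < f (π/2 - s) := by
        simp only [hfdef]
        rw [abs_of_pos (by linarith), abs_of_pos (by linarith)]
        exact Real.log_lt_log (by linarith) (by linarith)
      linarith
    · apply intervalIntegral_pos_of_pos_on (hInt2.sub hInt4) _ hgt
      intro s hs
      have hs4 : π/4 < s := hs.1
      have hs2 : s < π/2 := lt_of_lt_of_le hs.2 hx.2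
      have hcos : 0 < Real.sin (π/2 - s) :=
        Real.sin_pos_of_pos_of_lt_pi (by linarith) (by linarith)
      have hmono : Real.sin (π/2 - s) < Real.sin s := by
        apply Real.strictMonoOn_sin ⟨by linarith, by linarith⟩ ⟨by linarith, by linarith⟩
        linarith
      have : f (π/2 - s) < f s := by
        simp only [hfdef]
        rw [abs_of_pos (by linarith), abs_of_pos (by linarith)]
        exact Real.log_lt_log (by linarith) (by linarith)
      linarith
  linarith [key ▸ hkey]

/-- On `[0, π/2]` the function `g(x) = Λ(x) + Λ(π/2 − x)` attains its maximum value
`2Λ(π/4)` at `x = π/4`, and this is the only maximum point. -/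
theorem stmt_4 :
    (Real.pi / 4 ∈ Set.Icc 0 (Real.pi / 2)) ∧
    Lob (Real.pi / 4) + Lob (Real.pi / 2 - Real.pi / 4) = 2 * Lob (Real.pi / 4) ∧
    (∀ x ∈ Set.Icc 0 (Real.pi / 2),
      Lob x + Lob (Real.pi / 2 - x) ≤ 2 * Lob (Real.pi / 4)) ∧
    (∀ x ∈ Set.Icc 0 (Real.pi / 2),
      Lob x + Lob (Real.pi / 2 - x) = 2 * Lob (Real.pi / 4) → x = Real.pi / 4) := by
  have hpi := Real.pi_pos
  have h4 : Real.pi / 4 ∈ Set.Icc (0:ℝ) (Real.pi / 2) := ⟨by linarith, by linarith⟩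
  have heq : Lob (Real.pi / 4) + Lob (Real.pi / 2 - Real.pi / 4) = 2 * Lob (Real.pi / 4) := by
    rw [show Real.pi / 2 - Real.pi / 4 = Real.pi / 4 by ring]; ring
  refine ⟨h4, heq, ?_, ?_⟩
  · intro x hx
    by_cases hne : x = Real.pi / 4
    · rw [hne]; exact le_of_eq heq
    · exact le_of_lt (lob_key x hx hne)
  · intro x hx hx4
    by_contra hne
    exact absurd hx4 (ne_of_lt (lob_key x hx hne))
end

section
/- For x ∈ (0, π), the Lobachevsky function Λ is differentiable at x with derivative Λ'(x) = −log(2 sin x). -/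
open Real Filter Set Topology

lemma intervalIntegrable_log_zero (x : ℝ) (hx : 0 < x) :
    IntervalIntegrable Real.log MeasureTheory.volume 0 x := by
  have base : ∀ b : ℝ, 0 < b → b ≤ 1 → IntervalIntegrable Real.log MeasureTheory.volume 0 b := by
    intro b hb hb1
    rw [intervalIntegrable_iff_integrableOn_Ioc_of_le hb.le]
    have h : MeasureTheory.IntegrableOn (fun s : ℝ => -Real.log s) (Ioc 0 b) := by
      apply intervalIntegral.integrableOn_deriv_of_nonneg
        (g := fun s : ℝ => s - s * Real.log s)
      · exact (continuous_id.sub Real.continuous_mul_log).continuousOn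
      · intro y hy
        have h1 : HasDerivAt (fun s : ℝ => s - s * Real.log s) (1 - (Real.log y + 1)) y :=
          (hasDerivAt_id y).sub (Real.hasDerivAt_mul_log hy.1.ne')
        convert h1 using 1; ring
      · intro y hy
        have : Real.log y ≤ 0 := Real.log_nonpos hy.1.le (hy.2.le.trans hb1)
        linarith
    refine (h.neg.congr (Filter.Eventually.of_forall fun s => ?_) : _)
    simp
  rcases le_or_gt x 1 with h | h
  · exact base x hx h
  · exact (base 1 one_pos le_rfl).trans
      (intervalIntegral.intervalIntegrable_log (Set.notMem_uIcc_of_lt zero_lt_one (by linarith)))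

lemma intervalIntegrable_log_two_sin (x : ℝ) (hx0 : 0 < x) (hxpi : x < Real.pi) :
    IntervalIntegrable (fun s => Real.log |2 * Real.sin s|) MeasureTheory.volume 0 x := by
  set h : ℝ → ℝ := fun s => if s = 0 then 2 else 2 * Real.sin s / s with hh
  have hcont : ContinuousOn h (Icc 0 x) := by
    intro s hs
    rcases eq_or_ne s 0 with rfl | hs0
    · -- continuity at 0
      have hslope : Tendsto (fun t : ℝ => Real.sin t / t) (𝓝[≠] (0:ℝ)) (𝓝 1) := by
        have h1 := Real.hasDerivAt_sin 0
        rw [hasDerivAt_iff_tendsto_slope] at h1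
        simp only [Real.cos_zero] at h1
        refine h1.congr (fun t => ?_)
        simp [slope_def_field]
      have htend : Tendsto h (𝓝[≠] (0:ℝ)) (𝓝 2) := by
        have h2 : Tendsto (fun t : ℝ => 2 * (Real.sin t / t)) (𝓝[≠] (0:ℝ)) (𝓝 2) := by
          simpa using hslope.const_mul 2
        refine h2.congr' ?_
        filter_upwards [self_mem_nhdsWithin] with t ht
        have ht' : t ≠ 0 := ht
        simp [hh, ht', mul_div_assoc]
      rw [← continuousWithinAt_diff_self]
      have hcw : ContinuousWithinAt h ({0}ᶜ : Set ℝ) 0 := by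
        rw [ContinuousWithinAt]
        have h0 : h 0 = 2 := by simp [hh]
        rw [h0]
        exact htend
      exact hcw.mono (fun t ht => ht.2)
    · have : ContinuousAt h s := by
        have : ∀ᶠ t in 𝓝 s, h t = 2 * Real.sin t / t := by
          filter_upwards [isOpen_ne.mem_nhds hs0] with t ht
          simp [hh, ht]
        refine ContinuousAt.congr ?_ (Filter.EventuallyEq.symm this)
        exact (continuousAt_const.mul Real.continuous_sin.continuousAt).div
          continuousAt_id hs0
      exact this.continuousWithinAt
  have hpos : ∀ s ∈ Icc 0 x, h s ≠ 0 := by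
    intro s hs
    rcases eq_or_ne s 0 with rfl | hs0
    · simp [hh]
    · have hs' : 0 < s := lt_of_le_of_ne hs.1 (Ne.symm hs0)
      have hsin : 0 < Real.sin s := Real.sin_pos_of_pos_of_lt_pi hs' (hs.2.trans_lt hxpi)
      simp only [hh, if_neg hs0]
      positivity
  have h1 : IntervalIntegrable (fun s => Real.log (h s)) MeasureTheory.volume 0 x := by
    apply ContinuousOn.intervalIntegrable
    rw [uIcc_of_le hx0.le]
    exact ContinuousOn.log hcont hpos
  have h2 := h1.add (intervalIntegrable_log_zero x hx0)
  refine h2.congr ?_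
  rw [uIoc_of_le hx0.le]
  intro s hs
  beta_reduce
  have hs0 : s ≠ 0 := hs.1.ne'
  have hsin : 0 < Real.sin s :=
    Real.sin_pos_of_pos_of_lt_pi hs.1 (hs.2.trans_lt hxpi)
  have hhs : h s = 2 * Real.sin s / s := by simp [hh, hs0]
  rw [hhs, ← Real.log_mul (by positivity) hs0, div_mul_cancel₀ _ hs0,
    abs_of_pos (by positivity)]

/-- For `x ∈ (0, π)`, the Lobachevsky function is differentiable at `x` with
derivative `−log(2 sin x)`. -/
theorem stmt_5 (x : ℝ) (hx0 : 0 < x) (hxpi : x < Real.pi) :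
    HasDerivAt Lob (-Real.log (2 * Real.sin x)) x := by
  have hsin : 0 < Real.sin x := Real.sin_pos_of_pos_of_lt_pi hx0 hxpi
  have hmeas : StronglyMeasurableAtFilter (fun s => Real.log |2 * Real.sin s|)
      (𝓝 x) MeasureTheory.volume := by
    refine ⟨Set.univ, Filter.univ_mem, ?_⟩
    apply Measurable.aestronglyMeasurable
    exact Real.measurable_log.comp ((measurable_const.mul Real.measurable_sin).abs)
  have hcont : ContinuousAt (fun s => Real.log |2 * Real.sin s|) x := by
    apply ContinuousAt.log
    · exact (continuous_abs.comp (continuous_const.mul Real.continuous_sin)).continuousAt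
    · simp only [abs_ne_zero]
      positivity
  have H := intervalIntegral.integral_hasDerivAt_right
    (intervalIntegrable_log_two_sin x hx0 hxpi) hmeas hcont
  have := H.neg
  simp only [abs_of_pos (show (0:ℝ) < 2 * Real.sin x by positivity)] at this
  exact this
end

section
/- For every a ∈ (0, 1), the limit as d → ∞ (over positive integers d) of (1/d)·∑_{i=1}^{⌊a·d⌋} log(2 sin(iπ/d)) equals −Λ(πa)/π. -/
open Real Filter Finset

section helpers
open MeasureTheory intervalIntegral Topology

lemma integrableOn_log_Icc {c : ℝ} (hc : 0 < c) :
    IntegrableOn Real.log (Set.Icc 0 c) := by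
  rw [integrableOn_Icc_iff_integrableOn_Ioc]
  have I1 : IntegrableOn Real.log (Set.Ioc (0:ℝ) 1) := by
    have h := integrableOn_deriv_of_nonneg (a := (0:ℝ)) (b := 1)
      (g := fun x => x - x * Real.log x) (g' := fun x => -Real.log x)
      ((continuous_id.sub Real.continuous_mul_log).continuousOn)
      (fun x hx => by
        have : HasDerivAt (fun x : ℝ => x * Real.log x) (Real.log x + 1) x :=
          Real.hasDerivAt_mul_log (ne_of_gt hx.1)
        exact ((hasDerivAt_id' x).sub this).congr_deriv (by ring))
      (fun x hx => by
        simpa using Real.log_nonpos hx.1.le hx.2.le)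
    exact integrable_neg_iff.mp h
  rcases le_total c 1 with h | h
  · exact I1.mono_set (Set.Ioc_subset_Ioc le_rfl h)
  · have I2 : IntegrableOn Real.log (Set.Ioc (1:ℝ) c) := by
      apply (ContinuousOn.integrableOn_Icc ?_).mono_set Set.Ioc_subset_Icc_self
      exact Real.continuousOn_log.mono (fun x hx => by
        simp only [Set.mem_compl_iff, Set.mem_singleton_iff]
        intro h0; rw [h0] at hx; exact absurd hx.1 (by norm_num))
    rw [← Set.Ioc_union_Ioc_eq_Ioc (le_of_lt one_pos) h]
    exact I1.union I2

lemma mul_cos_le_sin {s : ℝ} (h0 : 0 < s) (hπ : s < π) : s * Real.cos s ≤ Real.sin s := by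
  rcases le_or_gt (π/2) s with h | h
  · have hc : Real.cos s ≤ 0 := Real.cos_nonpos_of_pi_div_two_le_of_le h (by linarith [Real.pi_pos])
    have hs : 0 ≤ Real.sin s := Real.sin_nonneg_of_nonneg_of_le_pi h0.le hπ.le
    nlinarith
  · have hc : 0 < Real.cos s := Real.cos_pos_of_mem_Ioo ⟨by linarith, h⟩
    have ht := Real.lt_tan h0 h
    rw [Real.tan_eq_sin_div_cos] at ht
    rw [lt_div_iff₀ hc] at ht
    linarith

lemma sin_div_anti {x y : ℝ} (hx : 0 < x) (hxy : x ≤ y) (hy : y ≤ π) :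
    Real.sin y / y ≤ Real.sin x / x := by
  have key : AntitoneOn (fun s : ℝ => Real.sin s / s) (Set.Icc x π) := by
    have hder : ∀ s ∈ interior (Set.Icc x π), HasDerivAt (fun s : ℝ => Real.sin s / s)
        ((Real.cos s * s - Real.sin s * 1) / s ^ 2) s := by
      intro s hs
      rw [interior_Icc] at hs
      exact (Real.hasDerivAt_sin s).div (hasDerivAt_id s) (ne_of_gt (lt_trans hx hs.1))
    apply antitoneOn_of_deriv_nonpos (convex_Icc _ _)
    · apply Real.continuous_sin.continuousOn.div continuousOn_id
      intro s hs
      exact ne_of_gt (lt_of_lt_of_le hx hs.1)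
    · intro s hs
      exact (hder s hs).differentiableAt.differentiableWithinAt
    · intro s hs
      rw [(hder s hs).deriv]
      rw [interior_Icc] at hs
      have hs0 : (0:ℝ) < s := lt_trans hx hs.1
      apply div_nonpos_of_nonpos_of_nonneg _ (sq_nonneg s)
      have := mul_cos_le_sin hs0 hs.2
      nlinarith
  exact key ⟨le_rfl, le_trans hxy hy⟩ ⟨hxy, hy⟩ hxy

lemma key_mono (f : ℝ → ℝ) {a c : ℝ} (ha : 0 < a) (hac : a * π < c)
    (hint : IntegrableOn f (Set.Icc 0 c))
    (hmono : MonotoneOn f (Set.Ioc 0 c)) :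
    Tendsto (fun d : ℕ => (1/(d:ℝ)) * ∑ i ∈ Finset.Icc 1 ⌊a*(d:ℝ)⌋₊, f (i*π/d)) atTop
      (𝓝 ((1/π) * ∫ s in (0:ℝ)..(a*π), f s)) := by
  have hπ := Real.pi_pos
  have hc0 : 0 < c := lt_trans (by positivity) hac
  set N : ℕ → ℕ := fun d => ⌊a*(d:ℝ)⌋₊ with hNdef
  -- N d / d → a
  have hrN : Tendsto (fun d : ℕ => (N d : ℝ)/d) atTop (𝓝 a) := by
    apply tendsto_of_tendsto_of_tendsto_of_le_of_le' (g := fun d : ℕ => a - 1/(d:ℝ))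
      (h := fun _ : ℕ => a)
    · simpa using tendsto_const_nhds.sub (tendsto_one_div_atTop_nhds_zero_nat (𝕜 := ℝ))
    · exact tendsto_const_nhds
    · filter_upwards [eventually_ge_atTop 1] with d hd
      have hd0 : (0:ℝ) < d := by exact_mod_cast hd
      rw [le_div_iff₀ hd0]
      have h2 : (a - 1/(d:ℝ)) * d = a * d - 1 := by field_simp
      rw [h2]
      exact (Nat.sub_one_lt_floor _).le
    · filter_upwards [eventually_ge_atTop 1] with d hd
      have hd0 : (0:ℝ) < d := by exact_mod_cast hd
      rw [div_le_iff₀ hd0]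
      exact Nat.floor_le (by positivity)
  have hx1 : Tendsto (fun d : ℕ => (N d : ℝ)*π/d) atTop (𝓝 (a*π)) := by
    simpa [div_mul_eq_mul_div] using hrN.mul_const π
  have hstep : Tendsto (fun d : ℕ => π/(d:ℝ)) atTop (𝓝 0) := by
    simpa [mul_one_div, div_eq_mul_inv] using (tendsto_one_div_atTop_nhds_zero_nat (𝕜 := ℝ)).const_mul π
  have hx2 : Tendsto (fun d : ℕ => ((N d : ℝ)+1)*π/d) atTop (𝓝 (a*π)) := by
    have h := hx1.add hstep
    simp only [add_zero] at h
    convert h using 2 with d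
    ring
  -- the primitive
  set φ : ℝ → ℝ := fun x => ∫ s in (0:ℝ)..x, f s with hφdef
  have hφc : ContinuousOn φ (Set.Icc 0 c) := by
    have h1 := intervalIntegral.continuousOn_primitive (μ := volume) (a := 0) (b := c) hint
    exact h1.congr (fun x hx => intervalIntegral.integral_of_le hx.1)
  -- eventual facts
  have hev2 : ∀ᶠ d : ℕ in atTop, ((N d:ℝ)+1)*π/d ≤ c := (hx2.eventually_lt_const hac).mono
    (fun d h => h.le)
  have hmem1 : ∀ᶠ d : ℕ in atTop, (N d:ℝ)*π/d ∈ Set.Icc 0 c := by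
    filter_upwards [hev2] with d h2
    refine ⟨by positivity, le_trans ?_ h2⟩
    gcongr
    linarith
  have hmem2 : ∀ᶠ d : ℕ in atTop, ((N d:ℝ)+1)*π/d ∈ Set.Icc 0 c := by
    filter_upwards [hev2] with d h2
    exact ⟨by positivity, h2⟩
  have hmem0 : ∀ᶠ d : ℕ in atTop, π/(d:ℝ) ∈ Set.Icc 0 c := by
    filter_upwards [(hstep.eventually_lt_const hc0)] with d h2
    exact ⟨by positivity, h2.le⟩
  -- limits of the bounds
  have hlow : Tendsto (fun d : ℕ => (1/π) * φ ((N d:ℝ)*π/d)) atTop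
      (𝓝 ((1/π) * φ (a*π))) := by
    have hca : ContinuousWithinAt φ (Set.Icc 0 c) (a*π) :=
      hφc.continuousWithinAt ⟨by positivity, hac.le⟩
    exact (hca.tendsto.comp
      (tendsto_nhdsWithin_of_tendsto_nhds_of_eventually_within _ hx1 hmem1)).const_mul _
  have hup : Tendsto (fun d : ℕ => (1/π) * (φ (((N d:ℝ)+1)*π/d) - φ (π/(d:ℝ)))) atTop
      (𝓝 ((1/π) * φ (a*π))) := by
    have hca : ContinuousWithinAt φ (Set.Icc 0 c) (a*π) :=
      hφc.continuousWithinAt ⟨by positivity, hac.le⟩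
    have hc0' : ContinuousWithinAt φ (Set.Icc 0 c) 0 :=
      hφc.continuousWithinAt ⟨le_rfl, hc0.le⟩
    have t1 : Tendsto (fun d : ℕ => φ (((N d:ℝ)+1)*π/d)) atTop (𝓝 (φ (a*π))) :=
      hca.tendsto.comp (tendsto_nhdsWithin_of_tendsto_nhds_of_eventually_within _ hx2 hmem2)
    have t2 : Tendsto (fun d : ℕ => φ (π/(d:ℝ))) atTop (𝓝 (φ 0)) :=
      hc0'.tendsto.comp (tendsto_nhdsWithin_of_tendsto_nhds_of_eventually_within _ hstep hmem0)
    have hφ0 : φ 0 = 0 := intervalIntegral.integral_same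
    have := (t1.sub t2).const_mul (1/π)
    rw [hφ0, sub_zero] at this
    exact this
  -- the two-sided bound
  have main : ∀ d : ℕ, 1 ≤ d → ((N d:ℝ)+1)*π/d ≤ c →
      ((1/π) * φ ((N d:ℝ)*π/d) ≤ (1/(d:ℝ)) * ∑ i ∈ Finset.Icc 1 (N d), f (i*π/d)
       ∧ (1/(d:ℝ)) * ∑ i ∈ Finset.Icc 1 (N d), f (i*π/d)
          ≤ (1/π) * (φ (((N d:ℝ)+1)*π/d) - φ (π/(d:ℝ)))) := by
    intro d hd hcd
    have hd0 : (0:ℝ) < d := by exact_mod_cast hd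
    set h : ℝ := π/d with hhdef
    have hh0 : 0 < h := by positivity
    set n := N d with hndef
    have hcd' : ((n:ℝ)+1)*h ≤ c := by
      rw [hhdef, ← mul_div_assoc]
      exact hcd
    have hpt : ∀ i : ℕ, i ≤ n + 1 → (i:ℝ) * h ≤ c := by
      intro i hi
      refine le_trans ?_ hcd'
      have : (i:ℝ) ≤ (n:ℝ)+1 := by exact_mod_cast hi
      nlinarith
    have hII : ∀ u v : ℝ, 0 ≤ u → u ≤ v → v ≤ c → IntervalIntegrable f volume u v := by
      intro u v hu huv hv
      rw [intervalIntegrable_iff_integrableOn_Ioc_of_le huv]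
      exact hint.mono_set (fun s hs => ⟨le_trans hu hs.1.le, le_trans hs.2 hv⟩)
    have hIoc : ∀ u v : ℝ, 0 ≤ u → v ≤ c → IntegrableOn f (Set.Ioc u v) := by
      intro u v hu hv
      exact hint.mono_set (fun s hs => ⟨le_trans hu hs.1.le, le_trans hs.2 hv⟩)
    -- pointwise per-interval bounds
    have lowstep : ∀ i : ℕ, i + 1 ≤ n + 1 →
        (∫ s in ((i:ℝ)*h)..(((i:ℝ)+1)*h), f s) ≤ h * f (((i:ℝ)+1)*h) := by
      intro i hi
      have hle : (i:ℝ)*h ≤ ((i:ℝ)+1)*h := by nlinarith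
      have hic : ((i:ℝ)+1)*h ≤ c := by
        have := hpt (i+1) hi
        push_cast at this
        exact this
      rw [intervalIntegral.integral_of_le hle]
      have hvol : (volume (Set.Ioc ((i:ℝ)*h) (((i:ℝ)+1)*h))).toReal = h := by
        rw [Real.volume_Ioc, ENNReal.toReal_ofReal (by linarith)]
        ring
      calc (∫ s in Set.Ioc ((i:ℝ)*h) (((i:ℝ)+1)*h), f s)
          ≤ ∫ _ in Set.Ioc ((i:ℝ)*h) (((i:ℝ)+1)*h), f (((i:ℝ)+1)*h) := by
            apply setIntegral_mono_on
            · exact hIoc _ _ (by positivity) hic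
            · exact integrableOn_const measure_Ioc_lt_top.ne
            · exact measurableSet_Ioc
            · intro s hs
              have hs0 : 0 < s := lt_of_le_of_lt (by positivity) hs.1
              exact hmono ⟨hs0, le_trans hs.2 hic⟩ ⟨by positivity, hic⟩ hs.2
        _ = h * f (((i:ℝ)+1)*h) := by rw [setIntegral_const, measureReal_def, hvol, smul_eq_mul]
    have highstep : ∀ i : ℕ, 1 ≤ i → i + 1 ≤ n + 1 →
        h * f ((i:ℝ)*h) ≤ ∫ s in ((i:ℝ)*h)..(((i:ℝ)+1)*h), f s := by
      intro i hi1 hi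
      have hle : (i:ℝ)*h ≤ ((i:ℝ)+1)*h := by nlinarith
      have hic : ((i:ℝ)+1)*h ≤ c := by
        have := hpt (i+1) hi
        push_cast at this
        exact this
      have hi0 : (0:ℝ) < (i:ℝ)*h := by
        have : (1:ℝ) ≤ (i:ℝ) := by exact_mod_cast hi1
        nlinarith
      rw [intervalIntegral.integral_of_le hle]
      have hvol : (volume (Set.Ioc ((i:ℝ)*h) (((i:ℝ)+1)*h))).toReal = h := by
        rw [Real.volume_Ioc, ENNReal.toReal_ofReal (by linarith)]
        ring
      calc h * f ((i:ℝ)*h)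
          = ∫ _ in Set.Ioc ((i:ℝ)*h) (((i:ℝ)+1)*h), f ((i:ℝ)*h) := by
            rw [setIntegral_const, measureReal_def, hvol, smul_eq_mul]
        _ ≤ ∫ s in Set.Ioc ((i:ℝ)*h) (((i:ℝ)+1)*h), f s := by
            apply setIntegral_mono_on
            · exact integrableOn_const measure_Ioc_lt_top.ne
            · exact hIoc _ _ (by positivity) hic
            · exact measurableSet_Ioc
            · intro s hs
              exact hmono ⟨hi0, le_trans hle hic⟩
                ⟨lt_trans hi0 hs.1, le_trans hs.2 hic⟩ hs.1.le
    -- adjacent interval sums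
    have hsum1 : (∑ i ∈ Finset.range n, ∫ s in (((i:ℕ):ℝ)*h)..(((i:ℝ)+1)*h), f s)
        = φ ((n:ℝ)*h) := by
      have := intervalIntegral.sum_integral_adjacent_intervals
        (a := fun i : ℕ => (i:ℝ)*h) (n := n) (μ := volume) (f := f) ?_
      · push_cast at this
        rw [this]
        simp [hφdef]
      · intro k hk
        apply hII _ _ (by positivity) (by push_cast; nlinarith)
        exact hpt (k+1) (by omega)
    have hsum2 : (∑ i ∈ Finset.range n, ∫ s in (((i:ℝ)+1)*h)..(((i:ℝ)+1+1)*h), f s)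
        = φ (((n:ℝ)+1)*h) - φ h := by
      have := intervalIntegral.sum_integral_adjacent_intervals
        (a := fun i : ℕ => ((i:ℝ)+1)*h) (n := n) (μ := volume) (f := f) ?_
      · push_cast at this
        rw [this]
        have e1 : φ (((n:ℝ)+1)*h) - φ ((0+1:ℝ)*h) = ∫ s in ((0+1:ℝ)*h)..(((n:ℝ)+1)*h), f s := by
          apply intervalIntegral.integral_interval_sub_left
          · exact hII _ _ le_rfl (by positivity) hcd'
          · exact hII _ _ le_rfl (by nlinarith) (le_trans (by nlinarith) hcd')
        rw [← e1]
        norm_num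
      · intro k hk
        apply hII _ _ (by positivity) (by push_cast; nlinarith)
        have := hpt (k+2) (by omega)
        push_cast at this ⊢
        linarith
    -- reindex the main sum
    have hre : ∀ G : ℕ → ℝ, (∑ i ∈ Finset.Icc 1 n, G i) = ∑ i ∈ Finset.range n, G (i+1) := by
      intro G
      rw [← Finset.Ico_add_one_right_eq_Icc, Finset.sum_Ico_eq_sum_range]
      simp [add_comm]
    constructor
    · -- lower bound
      have hchain : φ ((n:ℝ)*h) ≤ h * ∑ i ∈ Finset.Icc 1 n, f (i*π/d) := by
        rw [← hsum1, Finset.mul_sum, hre (fun i => h * f (i*π/d))]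
        apply Finset.sum_le_sum
        intro i hi
        rw [Finset.mem_range] at hi
        have := lowstep i (by omega)
        push_cast
        have harg : ((i:ℝ)+1) * π/d = ((i:ℝ)+1)*h := by rw [hhdef]; ring
        rw [harg]
        exact this
      calc (1/π) * φ ((n:ℝ)*π/d) = (1/π) * φ ((n:ℝ)*h) := by rw [hhdef, mul_div_assoc]
        _ ≤ (1/π) * (h * ∑ i ∈ Finset.Icc 1 n, f (i*π/d)) := by
            apply mul_le_mul_of_nonneg_left hchain (by positivity)
        _ = (1/(d:ℝ)) * ∑ i ∈ Finset.Icc 1 n, f (i*π/d) := by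
            rw [hhdef]
            field_simp
    · -- upper bound
      have hchain : h * ∑ i ∈ Finset.Icc 1 n, f (i*π/d) ≤ φ (((n:ℝ)+1)*h) - φ h := by
        rw [← hsum2, Finset.mul_sum, hre (fun i => h * f (i*π/d))]
        apply Finset.sum_le_sum
        intro i hi
        rw [Finset.mem_range] at hi
        have := highstep (i+1) (by omega) (by omega)
        push_cast at this ⊢
        have harg : ((i:ℝ)+1) * π/d = ((i:ℝ)+1)*h := by rw [hhdef]; ring
        rw [harg]
        exact this
      calc (1/(d:ℝ)) * ∑ i ∈ Finset.Icc 1 n, f (i*π/d)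
          = (1/π) * (h * ∑ i ∈ Finset.Icc 1 n, f (i*π/d)) := by
            rw [hhdef]; field_simp; exact Finset.sum_congr rfl (fun x _ => by rw [mul_comm π])
        _ ≤ (1/π) * (φ (((n:ℝ)+1)*h) - φ h) := by
            apply mul_le_mul_of_nonneg_left hchain (by positivity)
        _ = (1/π) * (φ (((n:ℝ)+1)*π/d) - φ (π/(d:ℝ))) := by
            rw [hhdef, mul_div_assoc]
  -- squeeze
  apply tendsto_of_tendsto_of_tendsto_of_le_of_le' hlow hup
  · filter_upwards [eventually_ge_atTop 1, hev2] with d hd h2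
    exact (main d hd h2).1
  · filter_upwards [eventually_ge_atTop 1, hev2] with d hd h2
    exact (main d hd h2).2

lemma key_anti (f : ℝ → ℝ) {a c : ℝ} (ha : 0 < a) (hac : a * π < c)
    (hint : IntegrableOn f (Set.Icc 0 c))
    (hanti : AntitoneOn f (Set.Ioc 0 c)) :
    Tendsto (fun d : ℕ => (1/(d:ℝ)) * ∑ i ∈ Finset.Icc 1 ⌊a*(d:ℝ)⌋₊, f (i*π/d)) atTop
      (𝓝 ((1/π) * ∫ s in (0:ℝ)..(a*π), f s)) := by
  have h := (key_mono (fun s => -f s) ha hac hint.neg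
    (fun x hx y hy hxy => neg_le_neg (hanti hx hy hxy))).neg
  simpa [intervalIntegral.integral_neg, mul_neg, neg_neg, Finset.sum_neg_distrib] using h

lemma log_two_mul_integrable {c : ℝ} (hc : 0 < c) :
    IntegrableOn (fun s => Real.log (2*s)) (Set.Icc 0 c) := by
  have h1 : IntegrableOn (fun s => Real.log 2 + Real.log s) (Set.Icc 0 c) :=
    (integrableOn_const measure_Icc_lt_top.ne).add (integrableOn_log_Icc hc)
  apply h1.congr
  apply ae_restrict_of_ae
  have h0 : ∀ᵐ s : ℝ, s ≠ (0:ℝ) := by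
    rw [ae_iff]
    simp only [not_not, Set.setOf_eq_eq_singleton]
    exact measure_singleton 0
  filter_upwards [h0] with s hs
  rw [Real.log_mul two_ne_zero hs]

lemma sin_div_integrable {c : ℝ} (hc0 : 0 < c) (hcπ : c < π)
    (hanti : AntitoneOn (fun s => Real.log (Real.sin s / s)) (Set.Ioc 0 c)) :
    IntegrableOn (fun s => Real.log (Real.sin s / s)) (Set.Icc 0 c) := by
  set g : ℝ → ℝ := fun s => Real.log (Real.sin s / s) with hg
  apply Integrable.mono' (g := fun _ => |g c|)
    (integrableOn_const measure_Icc_lt_top.ne)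
  · exact ((Real.measurable_sin.div measurable_id).log).aestronglyMeasurable
  · rw [ae_restrict_iff' measurableSet_Icc]
    apply ae_of_all
    intro x hx
    rcases eq_or_lt_of_le hx.1 with h0 | h0
    · have : g x = 0 := by rw [hg, ← h0]; simp
      rw [Real.norm_eq_abs, this, abs_zero]
      exact abs_nonneg _
    · have hb1 : g x ≤ 0 := by
        apply Real.log_nonpos
        · exact div_nonneg (Real.sin_nonneg_of_nonneg_of_le_pi h0.le
            (le_trans hx.2 hcπ.le)) h0.le
        · rw [div_le_one h0]
          exact (Real.sin_lt h0).le
      have hb2 : g c ≤ g x := hanti ⟨h0, hx.2⟩ ⟨hc0, le_rfl⟩ hx.2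
      rw [Real.norm_eq_abs]
      exact abs_le_abs_of_nonpos hb1 hb2

end helpers

/-- For `a ∈ (0,1)`, as `d → ∞` over the positive integers,
`(1/d) ∑_{i=1}^{⌊ad⌋} log(2 sin(iπ/d)) → −Λ(πa)/π`. -/
theorem stmt_7 (a : ℝ) (ha0 : 0 < a) (ha1 : a < 1) :
    Filter.Tendsto
      (fun d : ℕ =>
        (1 / (d : ℝ)) *
          ∑ i ∈ Finset.Icc 1 ⌊a * (d : ℝ)⌋₊,
            Real.log (2 * Real.sin (i * Real.pi / d)))
      Filter.atTop (nhds (-Lob (Real.pi * a) / Real.pi)) := by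
  have hπ := Real.pi_pos
  set c : ℝ := (a+1)*π/2 with hcdef
  have hc0 : 0 < c := by positivity
  have hacπ : a * π < c := by rw [hcdef]; nlinarith
  have hcπ : c < π := by rw [hcdef]; nlinarith
  -- monotonicity facts
  have hmono_p : MonotoneOn (fun s => Real.log (2*s)) (Set.Ioc 0 c) := by
    intro x hx y hy hxy
    have h2x : (0:ℝ) < 2*x := by linarith [hx.1]
    exact Real.log_le_log h2x (by linarith)
  have hanti_g : AntitoneOn (fun s => Real.log (Real.sin s / s)) (Set.Ioc 0 c) := by
    intro x hx y hy hxy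
    have hsy : 0 < Real.sin y := Real.sin_pos_of_pos_of_lt_pi (lt_of_lt_of_le hx.1 hxy)
      (lt_of_le_of_lt hy.2 hcπ)
    have hy0 : 0 < y := lt_of_lt_of_le hx.1 hxy
    exact Real.log_le_log (div_pos hsy hy0) (sin_div_anti hx.1 hxy (le_trans hy.2 hcπ.le))
  -- limits for the two pieces
  have Hp := key_mono (fun s => Real.log (2*s)) ha0 hacπ (log_two_mul_integrable hc0) hmono_p
  have Hg := key_anti (fun s => Real.log (Real.sin s / s)) ha0 hacπ
    (sin_div_integrable hc0 hcπ hanti_g) hanti_g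
  have H := Hp.add Hg
  -- interval integrability on [0, aπ]
  have hIp : IntervalIntegrable (fun s => Real.log (2*s)) MeasureTheory.volume 0 (a*π) := by
    rw [intervalIntegrable_iff_integrableOn_Ioc_of_le (by positivity)]
    exact (log_two_mul_integrable hc0).mono_set
      (fun s hs => ⟨hs.1.le, hs.2.trans hacπ.le⟩)
  have hIg : IntervalIntegrable (fun s => Real.log (Real.sin s / s))
      MeasureTheory.volume 0 (a*π) := by
    rw [intervalIntegrable_iff_integrableOn_Ioc_of_le (by positivity)]
    exact (sin_div_integrable hc0 hcπ hanti_g).mono_set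
      (fun s hs => ⟨hs.1.le, hs.2.trans hacπ.le⟩)
  -- identify the limit value
  have hval : (1/π) * (∫ s in (0:ℝ)..(a*π), Real.log (2*s))
      + (1/π) * (∫ s in (0:ℝ)..(a*π), Real.log (Real.sin s / s))
      = -Lob (π*a)/π := by
    rw [Lob]
    have hsplit : (∫ s in (0:ℝ)..(π*a), Real.log |2 * Real.sin s|)
        = (∫ s in (0:ℝ)..(a*π), Real.log (2*s))
          + ∫ s in (0:ℝ)..(a*π), Real.log (Real.sin s / s) := by
      rw [mul_comm π a, ← intervalIntegral.integral_add hIp hIg]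
      apply intervalIntegral.integral_congr
      intro s hs
      rw [Set.uIcc_of_le (by positivity)] at hs
      rcases eq_or_lt_of_le hs.1 with h0 | h0
      · rw [← h0]; simp
      · have hsπ : s < π := lt_of_le_of_lt hs.2 (by nlinarith)
        have hsin : 0 < Real.sin s := Real.sin_pos_of_pos_of_lt_pi h0 hsπ
        show Real.log |2 * Real.sin s| = Real.log (2*s) + Real.log (Real.sin s / s)
        rw [abs_of_pos (by positivity),
          show (2:ℝ) * Real.sin s = (2*s) * (Real.sin s / s) from by
            field_simp]
        exact Real.log_mul (by positivity) (by positivity)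
    rw [hsplit]
    ring
  rw [hval] at H
  -- eventual equality of the sequences
  apply H.congr'
  filter_upwards [Filter.eventually_ge_atTop 1] with d hd
  have hd0 : (0:ℝ) < d := by exact_mod_cast hd
  rw [← mul_add, ← Finset.sum_add_distrib]
  congr 1
  apply Finset.sum_congr rfl
  intro i hi
  rw [Finset.mem_Icc] at hi
  have hi0 : (0:ℝ) < i := by exact_mod_cast hi.1
  have hiN : (i:ℝ) ≤ a*d :=
    le_trans (by exact_mod_cast hi.2) (Nat.floor_le (by positivity))
  have hs0 : 0 < (i:ℝ)*π/d := by positivity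
  have hsπ : (i:ℝ)*π/d < π := by
    rw [div_lt_iff₀ hd0]
    nlinarith
  have hsin : 0 < Real.sin ((i:ℝ)*π/d) := Real.sin_pos_of_pos_of_lt_pi hs0 hsπ
  have e1 : Real.log (2 * Real.sin ((i:ℝ)*π/d))
      = Real.log (2*((i:ℝ)*π/d)) + Real.log (Real.sin ((i:ℝ)*π/d) / ((i:ℝ)*π/d)) := by
    rw [show (2:ℝ) * Real.sin ((i:ℝ)*π/d)
        = (2*((i:ℝ)*π/d)) * (Real.sin ((i:ℝ)*π/d) / ((i:ℝ)*π/d)) from by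
          field_simp]
    exact Real.log_mul (by positivity) (by positivity)
  rw [e1]
end

section
/- The limit as k → ∞ of (1/(2k+1))·log( ∑_{j=0}^{k} ([k choose j]_{2k+1})^4 ) exists and equals (8/π)·Λ(π/4). (This is the analytic core of the Extended Volume Conjecture for universal hyperbolic links of complexity 1: the evaluation at e^{2πi/(2k+1)} of the (2k+1)-colored Jones invariant of such a link equals ∑_{j=0}^{k} ([k choose j]_{2k+1})^4, and 2πi times the right-hand side’s normalization matches Vol/(2π) with Vol = 2·Vol_Oct = 16·Λ(π/4).) -/
open Real Filter Finset

open MeasureTheory intervalIntegral Topology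

noncomputable def g (t : ℝ) : ℝ := Real.log (2 * Real.sin t)

lemma g_le (t : ℝ) : g t ≤ Real.log 2 := by
  have h : |2 * Real.sin t| ≤ 2 := by
    rw [abs_mul, abs_two]
    nlinarith [abs_sin_le_one t, abs_nonneg (Real.sin t)]
  rw [g, ← Real.log_abs]
  rcases eq_or_lt_of_le (abs_nonneg (2 * Real.sin t)) with h0 | h0
  · rw [← h0, Real.log_zero]; positivity
  · exact Real.log_le_log h0 h

lemma g_mono {s t : ℝ} (hs : 0 < s) (hst : s ≤ t) (ht : t ≤ π / 2) : g s ≤ g t := by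
  have h1 : Real.sin s ≤ Real.sin t := by
    apply Real.strictMonoOn_sin.monotoneOn ⟨by linarith [Real.pi_pos], by linarith⟩
      ⟨by linarith [Real.pi_pos], ht⟩ hst
  have h2 : 0 < Real.sin s := Real.sin_pos_of_pos_of_lt_pi hs
    (by nlinarith [Real.pi_pos])
  exact Real.log_le_log (by linarith) (by linarith)

lemma g_integrableOn : IntegrableOn g (Set.Ioc 0 (π / 2)) := by
  have hmaj : IntegrableOn (fun t : ℝ => Real.log π + 2 * t ^ (-(1/2) : ℝ))
      (Set.Ioc 0 (π / 2)) := by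
    apply Integrable.add (integrableOn_const (by
      simp [Real.pi_pos]))
    have := (intervalIntegral.intervalIntegrable_rpow' (a := 0) (b := π/2)
      (r := -(1/2)) (by norm_num)).const_mul 2
    rw [intervalIntegrable_iff_integrableOn_Ioc_of_le (by positivity)] at this
    exact this
  apply Integrable.mono' hmaj
  · exact (Real.measurable_log.comp (measurable_const.mul Real.measurable_sin)).aestronglyMeasurable
  · filter_upwards [ae_restrict_mem measurableSet_Ioc] with t ht
    obtain ⟨ht0, ht2⟩ := ht
    have hsin : 0 < Real.sin t := Real.sin_pos_of_pos_of_lt_pi ht0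
      (by nlinarith [Real.pi_pos])
    have hlow : (2 / π) * t ≤ Real.sin t := Real.mul_le_sin ht0.le ht2
    have hlog_low : Real.log (4 / π) + Real.log t ≤ g t := by
      rw [g, ← Real.log_mul (by positivity) (ne_of_gt ht0)]
      apply Real.log_le_log (by positivity)
      rw [div_mul_eq_mul_div]
      calc 4 * t / π = 2 * ((2/π) * t) := by ring
        _ ≤ 2 * Real.sin t := by linarith
    have habs_logt : |Real.log t| ≤ 2 * t ^ (-(1/2) : ℝ) := by
      rcases le_or_gt t 1 with h1 | h1
      · rw [abs_of_nonpos (Real.log_nonpos ht0.le h1)]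
        have : Real.log (t ^ (-(1/2) : ℝ)) ≤ t ^ (-(1/2) : ℝ) - 1 :=
          Real.log_le_sub_one_of_pos (by positivity)
        rw [Real.log_rpow ht0] at this
        nlinarith [Real.rpow_nonneg ht0.le (-(1/2) : ℝ)]
      · rw [abs_of_nonneg (Real.log_nonneg h1.le)]
        have h4 : t ≤ 4 := by nlinarith [Real.pi_lt_d2]
        have : t ^ (-(1/2) : ℝ) ≥ 1/2 := by
          rw [ge_iff_le, Real.rpow_neg ht0.le, le_inv_comm₀ (by norm_num) (by positivity)]
          calc t ^ ((1:ℝ)/2) ≤ 4 ^ ((1:ℝ)/2) :=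
            Real.rpow_le_rpow ht0.le h4 (by norm_num)
          _ = 2 := by
            rw [show (4:ℝ) = 2^(2:ℕ) by norm_num, ← Real.rpow_natCast 2 2,
              ← Real.rpow_mul (by norm_num)]
            norm_num [Real.rpow_one]
          _ ≤ (1/2:ℝ)⁻¹ := by norm_num
        have hle : Real.log t ≤ t - 1 := Real.log_le_sub_one_of_pos ht0
        nlinarith [Real.pi_lt_d2]
    rw [Real.norm_eq_abs, abs_le]
    constructor
    · have h4 : Real.log (4 / π) = Real.log 4 - Real.log π :=
        Real.log_div (by norm_num) (ne_of_gt Real.pi_pos)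
      have h5 : (0:ℝ) ≤ Real.log 4 := Real.log_nonneg (by norm_num)
      have h6 := neg_abs_le (Real.log t)
      linarith
    · calc g t ≤ Real.log 2 := g_le t
        _ ≤ Real.log π + 2 * t ^ (-(1/2):ℝ) := by
          have := Real.log_le_log two_pos (le_of_lt (by nlinarith [Real.pi_gt_three] : (2:ℝ) < π))
          nlinarith [Real.rpow_nonneg ht0.le (-(1/2):ℝ)]

lemma g_ii {a b : ℝ} (h0 : 0 ≤ a) (h0' : 0 ≤ b) (ha : a ≤ π/2) (hb : b ≤ π/2) :
    IntervalIntegrable g volume a b := by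
  rw [intervalIntegrable_iff]
  apply g_integrableOn.mono_set
  rw [Set.uIoc]
  exact Set.Ioc_subset_Ioc (le_min h0 h0') (max_le ha hb)

lemma g_refl (x : ℝ) : g (π - x) = g x := by simp [g, Real.sin_pi_sub]

lemma ae_ne_real (c : ℝ) : ∀ᵐ t : ℝ, t ≠ c := by
  have h : {t : ℝ | ¬ t ≠ c} = {c} := by ext; simp
  rw [MeasureTheory.ae_iff, h]
  exact measure_singleton c

lemma integral_g_pi_div_two : ∫ t in (0:ℝ)..(π/2), g t = 0 := by
  set A := ∫ t in (0:ℝ)..(π/2), g t with hA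
  have hpi := Real.pi_pos
  have hii : IntervalIntegrable g volume 0 (π/2) :=
    g_ii le_rfl (by positivity) (by positivity) le_rfl
  have hcos_ii : IntervalIntegrable (fun t => g (π/2 - t)) volume 0 (π/2) :=
    ((hii.comp_sub_left (π/2)).symm.mono_set (by simp))
  have hA2 : ∫ t in (0:ℝ)..(π/2), g (π/2 - t) = A := by
    rw [intervalIntegral.integral_comp_sub_left g (π/2)]
    norm_num
    exact hA.symm
  have hsum : ∫ t in (0:ℝ)..(π/2), (g t + g (π/2 - t)) = 2 * A := by
    rw [intervalIntegral.integral_add hii hcos_ii, hA2]; ring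
  have heq : ∫ t in (0:ℝ)..(π/2), (g t + g (π/2 - t)) = ∫ t in (0:ℝ)..(π/2), g (2*t) := by
    apply intervalIntegral.integral_congr_ae
    filter_upwards [ae_ne_real (π/2)] with t htne hmem
    rw [Set.uIoc_of_le (by positivity)] at hmem
    obtain ⟨ht0, ht2⟩ := hmem
    have ht2' : t < π/2 := lt_of_le_of_ne ht2 htne
    have hsin : 0 < Real.sin t := Real.sin_pos_of_pos_of_lt_pi ht0 (by linarith)
    have hcos : 0 < Real.cos t := Real.cos_pos_of_mem_Ioo ⟨by linarith, ht2'⟩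
    rw [g, g, g, Real.sin_pi_div_two_sub,
      ← Real.log_mul (mul_ne_zero two_ne_zero (ne_of_gt hsin))
        (mul_ne_zero two_ne_zero (ne_of_gt hcos)), Real.sin_two_mul]
    ring_nf
  have hdouble : ∫ t in (0:ℝ)..(π/2), g (2*t) = 2⁻¹ * ∫ t in (0:ℝ)..π, g t := by
    rw [intervalIntegral.integral_comp_mul_left g (two_ne_zero),
      show (2:ℝ)*0 = 0 by ring, show (2:ℝ)*(π/2) = π by ring, smul_eq_mul]
  have hgpi : IntervalIntegrable g volume (π/2) π := by
    have h1 := (hii.comp_sub_left π).symm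
    simpa [show (fun x => g (π - x)) = g from funext g_refl, sub_half] using h1
  have hrefl : ∫ t in (π/2:ℝ)..π, g t = A := by
    have h2 := intervalIntegral.integral_comp_sub_left g π (a := 0) (b := π/2)
    rw [show π - π/2 = π/2 by ring, sub_zero] at h2
    rw [← h2]
    simp only [g_refl, hA]
  have hsplit : ∫ t in (0:ℝ)..π, g t = 2 * A := by
    rw [← intervalIntegral.integral_add_adjacent_intervals hii hgpi, hrefl]; ring
  have : 2 * A = A := by rw [← hsum, heq, hdouble, hsplit]; ring
  linarith

noncomputable def Phi (x : ℝ) : ℝ := ∫ t in (0:ℝ)..x, g t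

lemma int_g_le {a b : ℝ} (h0 : 0 ≤ a) (hab : a ≤ b) (hb : b ≤ π/2) :
    ∫ t in a..b, g t ≤ (b - a) * Real.log 2 := by
  calc ∫ t in a..b, g t ≤ ∫ _t in a..b, Real.log 2 :=
        intervalIntegral.integral_mono_on hab (g_ii h0 (h0.trans hab) (hab.trans hb) hb)
          intervalIntegrable_const (fun x _ => g_le x)
    _ = (b - a) * Real.log 2 := by rw [intervalIntegral.integral_const, smul_eq_mul]

lemma const_le_int {a b : ℝ} (h0 : 0 < a) (hab : a ≤ b) (hb : b ≤ π/2) :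
    (b - a) * g a ≤ ∫ t in a..b, g t := by
  calc (b - a) * g a = ∫ _t in a..b, g a := by
        rw [intervalIntegral.integral_const, smul_eq_mul]
    _ ≤ ∫ t in a..b, g t :=
        intervalIntegral.integral_mono_on hab intervalIntegrable_const
          (g_ii h0.le (h0.le.trans hab) (hab.trans hb) hb)
          (fun x hx => g_mono h0 hx.1 (hx.2.trans hb))

lemma int_le_const {a b : ℝ} (h0 : 0 ≤ a) (hab : a ≤ b) (hb : b ≤ π/2) :
    ∫ t in a..b, g t ≤ (b - a) * g b := by
  calc ∫ t in a..b, g t ≤ ∫ _t in a..b, g b := by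
        apply intervalIntegral.integral_mono_ae_restrict hab
          (g_ii h0 (h0.trans hab) (hab.trans hb) hb) intervalIntegrable_const
        filter_upwards [ae_restrict_mem measurableSet_Icc,
          MeasureTheory.ae_restrict_of_ae (ae_ne_real 0)] with t ht htne
        exact g_mono (lt_of_le_of_ne (h0.trans ht.1) (Ne.symm htne)) ht.2 hb
    _ = (b - a) * g b := by rw [intervalIntegral.integral_const, smul_eq_mul]

lemma int_shift {a b δ : ℝ} (h0 : 0 ≤ a) (hab : a ≤ b) (hδ : 0 ≤ δ) (hb : b + δ ≤ π/2) :
    ∫ t in a..b, g t ≤ ∫ t in (a+δ)..(b+δ), g t := by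
  rw [← intervalIntegral.integral_comp_add_right g δ]
  apply intervalIntegral.integral_mono_ae_restrict hab
    (g_ii h0 (h0.trans hab) (by linarith) (by linarith))
    (((g_ii (by linarith : (0:ℝ) ≤ a + δ) (by linarith : (0:ℝ) ≤ b + δ)
      (by linarith) hb).comp_add_right δ).mono_set (by simp))
  filter_upwards [ae_restrict_mem measurableSet_Icc,
    MeasureTheory.ae_restrict_of_ae (ae_ne_real 0)] with t ht htne
  exact g_mono (lt_of_le_of_ne (h0.trans ht.1) (Ne.symm htne)) (by linarith)
    (by linarith [ht.2])

lemma Phi_convex {x c : ℝ} (hx : 0 ≤ x) (hxc : x ≤ c/2) (hc : c ≤ π/2) :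
    2 * Phi (c/2) ≤ Phi x + Phi (c - x) := by
  have h2 : x ≤ c - x := by linarith
  have hcx : c - x ≤ π/2 := by linarith
  have hii1 : IntervalIntegrable g volume 0 x := g_ii le_rfl hx (by linarith [Real.pi_pos]) (by linarith)
  have hii2 : IntervalIntegrable g volume 0 (c/2) := g_ii le_rfl (by linarith) (by linarith [Real.pi_pos]) (by linarith)
  have hii3 : IntervalIntegrable g volume 0 (c - x) := g_ii le_rfl (by linarith) (by linarith [Real.pi_pos]) hcx
  have e1 : Phi (c/2) - Phi x = ∫ t in x..(c/2), g t := by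
    rw [Phi, Phi, ← intervalIntegral.integral_interval_sub_left hii2 hii1]
  have e2 : Phi (c - x) - Phi (c/2) = ∫ t in (c/2)..(c-x), g t := by
    rw [Phi, Phi, ← intervalIntegral.integral_interval_sub_left hii3 hii2]
  have e3 : ∫ t in x..(c/2), g t ≤ ∫ t in (c/2)..(c-x), g t := by
    have := int_shift (δ := c/2 - x) hx hxc (by linarith) (by linarith)
    rwa [show x + (c/2 - x) = c/2 by ring, show c/2 + (c/2 - x) = c - x by ring] at this
  linarith

lemma lower_riemann {h : ℝ} (hh : 0 < h) :
    ∀ n : ℕ, (n : ℝ) * h ≤ π/2 →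
      Phi ((n : ℝ) * h) ≤ h * ∑ i ∈ Finset.Icc 1 n, g ((i : ℝ) * h) := by
  intro n
  induction n with
  | zero => intro _; simp [Phi]
  | succ n ih =>
    intro hn
    have hn' : (n : ℝ) * h ≤ π/2 := by
      have : (n : ℝ) ≤ (n+1 : ℕ) := by push_cast; linarith
      nlinarith
    have hnn : (n : ℝ) * h ≤ ((n+1 : ℕ) : ℝ) * h := by push_cast; nlinarith
    have hsplit : Phi (((n+1:ℕ) : ℝ) * h) = Phi ((n:ℝ)*h) + ∫ t in ((n:ℝ)*h)..(((n+1:ℕ):ℝ)*h), g t := by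
      rw [Phi, Phi, intervalIntegral.integral_add_adjacent_intervals
        (g_ii le_rfl (by positivity) (by linarith [Real.pi_pos]) hn')
        (g_ii (by positivity) (by positivity) hn' hn)]
    have hlast : ∫ t in ((n:ℝ)*h)..(((n+1:ℕ):ℝ)*h), g t ≤ h * g (((n+1:ℕ):ℝ)*h) := by
      have := int_le_const (a := (n:ℝ)*h) (b := ((n+1:ℕ):ℝ)*h) (by positivity) hnn hn
      have harith : (((n+1:ℕ):ℝ)*h - (n:ℝ)*h) = h := by push_cast; ring
      rwa [harith] at this
    rw [Finset.sum_Icc_succ_top (by norm_num : 1 ≤ n+1)]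
    have := ih hn'
    rw [mul_add]
    push_cast at *
    linarith

lemma upper_riemann {h : ℝ} (hh : 0 < h) :
    ∀ n : ℕ, ((n : ℝ) + 1) * h ≤ π/2 →
      h * ∑ i ∈ Finset.Icc 1 n, g ((i : ℝ) * h) ≤ Phi (((n:ℝ)+1) * h) - Phi h := by
  intro n
  induction n with
  | zero => intro _; simp [Phi]
  | succ n ih =>
    intro hn
    have hn' : ((n : ℝ) + 1) * h ≤ π/2 := by push_cast at hn; nlinarith
    have hsplit : Phi (((n:ℝ)+1+1) * h) = Phi (((n:ℝ)+1)*h) + ∫ t in (((n:ℝ)+1)*h)..(((n:ℝ)+1+1)*h), g t := by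
      rw [Phi, Phi, intervalIntegral.integral_add_adjacent_intervals
        (g_ii le_rfl (by positivity) (by linarith [Real.pi_pos]) hn')
        (g_ii (by positivity) (by positivity) hn' (by push_cast at hn ⊢; linarith))]
    have hlast : h * g (((n:ℝ)+1)*h) ≤ ∫ t in (((n:ℝ)+1)*h)..(((n:ℝ)+1+1)*h), g t := by
      have := const_le_int (a := ((n:ℝ)+1)*h) (b := ((n:ℝ)+1+1)*h) (by positivity)
        (by nlinarith) (by push_cast at hn ⊢; linarith)
      have harith : (((n:ℝ)+1+1)*h - ((n:ℝ)+1)*h) = h := by ring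
      rwa [harith] at this
    rw [Finset.sum_Icc_succ_top (by norm_num : 1 ≤ n+1)]
    have := ih hn'
    rw [mul_add]
    push_cast at *
    linarith

lemma T_upper {h : ℝ} (hh : 0 < h) (hhpi : h ≤ π/2) (n : ℕ) (hn : (n : ℝ) * h ≤ π/2) :
    h * ∑ i ∈ Finset.Icc 1 n, g ((i : ℝ) * h) ≤ Phi ((n:ℝ)*h) - Phi h + h * Real.log 2 := by
  cases n with
  | zero =>
    have h1 : Phi h ≤ h * Real.log 2 := by
      simpa [Phi] using int_g_le (a := 0) (b := h) le_rfl hh.le hhpi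
    have h0 : Phi 0 = 0 := intervalIntegral.integral_same
    simp only [Nat.cast_zero, zero_mul, show Finset.Icc 1 0 = (∅ : Finset ℕ) from rfl,
      Finset.sum_empty, mul_zero, h0]
    linarith
  | succ n =>
    have hn1 : ((n:ℝ)+1)*h ≤ π/2 := by push_cast at hn; linarith
    have := upper_riemann hh n hn1
    rw [Finset.sum_Icc_succ_top (by norm_num : 1 ≤ n+1), mul_add]
    have hg := g_le (((n+1:ℕ):ℝ)*h)
    push_cast at *
    nlinarith [hh.le]

section

lemma dcast (k : ℕ) : ((2*k+1 : ℕ) : ℝ) = 2*(k:ℝ)+1 := by push_cast; ring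

lemma harg_pos {k : ℕ} : 0 < π / (2*(k:ℝ)+1) := by
  apply div_pos Real.pi_pos; positivity

lemma arg_lt {k i : ℕ} (hi : i ≤ k) : (i:ℝ) * (π / (2*(k:ℝ)+1)) < π/2 := by
  have h1 : (i:ℝ) ≤ k := by exact_mod_cast hi
  rw [mul_div_assoc'] at *
  rw [div_lt_div_iff₀ (by positivity) (by norm_num)]
  have := Real.pi_pos
  nlinarith

lemma sin_arg_pos {k i : ℕ} (hi1 : 1 ≤ i) (hi : i ≤ k) :
    0 < Real.sin ((i:ℝ) * (π / (2*(k:ℝ)+1))) := by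
  apply Real.sin_pos_of_pos_of_lt_pi
  · have : (1:ℝ) ≤ i := by exact_mod_cast hi1
    nlinarith [harg_pos (k := k)]
  · have := arg_lt hi
    have := Real.pi_pos
    linarith

lemma qInt_eq {k i : ℕ} (hi1 : 1 ≤ i) (hi : i ≤ k) :
    qInt (2*k+1) i = Real.sin ((i:ℝ) * (π / (2*(k:ℝ)+1))) / Real.sin (π / (2*(k:ℝ)+1)) := by
  rw [qInt, dcast, mul_div_assoc]

lemma sin_h_pos {k : ℕ} (hk : 1 ≤ k) : 0 < Real.sin (π / (2*(k:ℝ)+1)) := by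
  apply Real.sin_pos_of_pos_of_lt_pi harg_pos
  rw [div_lt_iff₀ (by positivity)]
  have : (1:ℝ) ≤ k := by exact_mod_cast hk
  nlinarith [Real.pi_pos]

lemma qInt_pos {k i : ℕ} (hk : 1 ≤ k) (hi1 : 1 ≤ i) (hi : i ≤ k) : 0 < qInt (2*k+1) i := by
  rw [qInt_eq hi1 hi]
  exact div_pos (sin_arg_pos hi1 hi) (sin_h_pos hk)

lemma qFact_pos {k n : ℕ} (hk : 1 ≤ k) (hn : n ≤ k) : 0 < qFact (2*k+1) n := by
  apply Finset.prod_pos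
  intro i hi
  rw [Finset.mem_Icc] at hi
  exact qInt_pos hk hi.1 (hi.2.trans hn)

lemma log_qFact {k n : ℕ} (hk : 1 ≤ k) (hn : n ≤ k) :
    Real.log (qFact (2*k+1) n) =
      (∑ i ∈ Finset.Icc 1 n, g ((i:ℝ) * (π / (2*(k:ℝ)+1)))) - n * g (π / (2*(k:ℝ)+1)) := by
  rw [qFact, Real.log_prod (fun i hi => by
    rw [Finset.mem_Icc] at hi; exact ne_of_gt (qInt_pos hk hi.1 (hi.2.trans hn)))]
  have : ∀ i ∈ Finset.Icc 1 n, Real.log (qInt (2*k+1) i) =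
      g ((i:ℝ) * (π / (2*(k:ℝ)+1))) - g (π / (2*(k:ℝ)+1)) := by
    intro i hi
    rw [Finset.mem_Icc] at hi
    rw [qInt_eq hi.1 (hi.2.trans hn),
      Real.log_div (ne_of_gt (sin_arg_pos hi.1 (hi.2.trans hn))) (ne_of_gt (sin_h_pos hk)),
      g, g, Real.log_mul two_ne_zero (ne_of_gt (sin_arg_pos hi.1 (hi.2.trans hn))),
      Real.log_mul two_ne_zero (ne_of_gt (sin_h_pos hk))]
    ring
  rw [Finset.sum_congr rfl this, Finset.sum_sub_distrib, Finset.sum_const, Nat.card_Icc]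
  simp

lemma qBinom_pos {k j : ℕ} (hk : 1 ≤ k) (hj : j ≤ k) : 0 < qBinom (2*k+1) k j :=
  div_pos (qFact_pos hk le_rfl) (mul_pos (qFact_pos hk hj) (qFact_pos hk (Nat.sub_le k j)))

lemma log_qBinom {k j : ℕ} (hk : 1 ≤ k) (hj : j ≤ k) :
    Real.log (qBinom (2*k+1) k j) =
      (∑ i ∈ Finset.Icc 1 k, g ((i:ℝ) * (π / (2*(k:ℝ)+1))))
      - (∑ i ∈ Finset.Icc 1 j, g ((i:ℝ) * (π / (2*(k:ℝ)+1))))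
      - (∑ i ∈ Finset.Icc 1 (k-j), g ((i:ℝ) * (π / (2*(k:ℝ)+1)))) := by
  rw [qBinom, Real.log_div (ne_of_gt (qFact_pos hk le_rfl))
    (ne_of_gt (mul_pos (qFact_pos hk hj) (qFact_pos hk (Nat.sub_le k j)))),
    Real.log_mul (ne_of_gt (qFact_pos hk hj)) (ne_of_gt (qFact_pos hk (Nat.sub_le k j))),
    log_qFact hk le_rfl, log_qFact hk hj, log_qFact hk (Nat.sub_le k j)]
  have : ((k - j : ℕ) : ℝ) = (k:ℝ) - j := by
    exact_mod_cast Nat.cast_sub (R := ℝ) hj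
  rw [this]
  ring

end

lemma key (k : ℕ) (hk1 : 1 ≤ k) :
    (4/π) * (Phi ((k:ℝ)*(π/(2*(k:ℝ)+1))) - Phi (((k/2:ℕ):ℝ)*(π/(2*(k:ℝ)+1)))
        - Phi (((k - k/2:ℕ):ℝ)*(π/(2*(k:ℝ)+1))) + 2*Phi (π/(2*(k:ℝ)+1))
        - 2*(π/(2*(k:ℝ)+1))*Real.log 2)
      ≤ (1/(2*(k:ℝ)+1)) * Real.log (∑ j ∈ Finset.range (k+1), (qBinom (2*k+1) k j)^4) ∧
    (1/(2*(k:ℝ)+1)) * Real.log (∑ j ∈ Finset.range (k+1), (qBinom (2*k+1) k j)^4)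
      ≤ Real.log ((k:ℝ)+1)/(2*(k:ℝ)+1)
        + (4/π) * (Phi ((k:ℝ)*(π/(2*(k:ℝ)+1))) - Phi (π/(2*(k:ℝ)+1))
            + (π/(2*(k:ℝ)+1))*Real.log 2 - 2*Phi ((k:ℝ)*(π/(2*(k:ℝ)+1))/2)) := by
  have hπ := Real.pi_pos
  set h : ℝ := π/(2*(k:ℝ)+1) with hh_def
  have hk1R : (1:ℝ) ≤ (k:ℝ) := by exact_mod_cast hk1
  have hh : 0 < h := by positivity
  have hhpi : h ≤ π/2 := by
    rw [hh_def, div_le_div_iff₀ (by positivity) (by norm_num)]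
    nlinarith
  have hkh : (k:ℝ)*h ≤ π/2 := by
    rw [hh_def, mul_div_assoc', div_le_div_iff₀ (by positivity) (by norm_num)]
    nlinarith
  have hnh : ∀ n : ℕ, n ≤ k → (n:ℝ)*h ≤ π/2 := by
    intro n hn
    have : (n:ℝ) ≤ k := by exact_mod_cast hn
    nlinarith
  -- T and bounds
  set T : ℕ → ℝ := fun n => ∑ i ∈ Finset.Icc 1 n, g ((i:ℝ) * h) with hT_def
  have Tlow : ∀ n : ℕ, n ≤ k → Phi ((n:ℝ)*h) ≤ h * T n := fun n hn =>
    lower_riemann hh n (hnh n hn)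
  have Tup : ∀ n : ℕ, n ≤ k → h * T n ≤ Phi ((n:ℝ)*h) - Phi h + h * Real.log 2 := fun n hn =>
    T_upper hh hhpi n (hnh n hn)
  have hcast : ∀ j : ℕ, j ≤ k → ((k - j : ℕ) : ℝ) = (k:ℝ) - j := fun j hj => by
    exact_mod_cast Nat.cast_sub (R := ℝ) hj
  -- upper bound on each log binom
  set W : ℝ := Phi ((k:ℝ)*h) - Phi h + h*Real.log 2 - 2*Phi ((k:ℝ)*h/2) with hW_def
  have bound_up : ∀ j : ℕ, j ≤ k → h * Real.log (qBinom (2*k+1) k j) ≤ W := by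
    intro j hj
    have hjR : (j:ℝ) ≤ k := by exact_mod_cast hj
    have hconv : 2 * Phi ((k:ℝ)*h/2) ≤ Phi ((j:ℝ)*h) + Phi (((k-j:ℕ):ℝ)*h) := by
      rw [hcast j hj, show ((k:ℝ) - j)*h = (k:ℝ)*h - (j:ℝ)*h by ring]
      rcases le_or_gt ((j:ℝ)*h) ((k:ℝ)*h/2) with hcase | hcase
      · exact Phi_convex (by positivity) hcase hkh
      · have h2 : (k:ℝ)*h - (j:ℝ)*h ≤ (k:ℝ)*h/2 := by linarith
        have := Phi_convex (x := (k:ℝ)*h - (j:ℝ)*h) (c := (k:ℝ)*h)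
          (by nlinarith) h2 hkh
        rw [show (k:ℝ)*h - ((k:ℝ)*h - (j:ℝ)*h) = (j:ℝ)*h by ring] at this
        linarith
    have e1 := log_qBinom hk1 hj
    have e2 : h * Real.log (qBinom (2*k+1) k j) = h * T k - h * T j - h * T (k-j) := by
      rw [e1]; ring
    have := Tup k le_rfl
    have := Tlow j hj
    have := Tlow (k-j) (Nat.sub_le k j)
    rw [e2, hW_def]
    linarith
  -- lower bound on log binom at m = k/2
  set m : ℕ := k/2 with hm_def
  have hm : m ≤ k := Nat.div_le_self k 2
  have bound_low : Phi ((k:ℝ)*h) - Phi (((m:ℕ):ℝ)*h) - Phi (((k-m:ℕ):ℝ)*h)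
      + 2*Phi h - 2*h*Real.log 2 ≤ h * Real.log (qBinom (2*k+1) k m) := by
    have e2 : h * Real.log (qBinom (2*k+1) k m) = h * T k - h * T m - h * T (k-m) := by
      rw [log_qBinom hk1 hm]; ring
    have := Tlow k le_rfl
    have := Tup m hm
    have := Tup (k-m) (Nat.sub_le k m)
    rw [e2]
    linarith
  -- sum bounds
  set S : ℝ := ∑ j ∈ Finset.range (k+1), (qBinom (2*k+1) k j)^4 with hS_def
  have hBpos : ∀ j ∈ Finset.range (k+1), (0:ℝ) < (qBinom (2*k+1) k j)^4 := by
    intro j hj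
    rw [Finset.mem_range] at hj
    exact pow_pos (qBinom_pos hk1 (Nat.lt_succ_iff.mp hj)) 4
  have hS_ge : (qBinom (2*k+1) k m)^4 ≤ S :=
    Finset.single_le_sum (f := fun j => (qBinom (2*k+1) k j)^4)
      (fun j hj => (hBpos j hj).le) (Finset.mem_range.mpr (Nat.lt_succ_iff.mpr hm))
  have hSpos : 0 < S := lt_of_lt_of_le (pow_pos (qBinom_pos hk1 hm) 4) hS_ge
  have hlogS_low : (4:ℝ) * Real.log (qBinom (2*k+1) k m) ≤ Real.log S := by
    have := Real.log_le_log (pow_pos (qBinom_pos hk1 hm) 4) hS_ge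
    rwa [Real.log_pow, Nat.cast_ofNat] at this
  have hexp : ∀ j ∈ Finset.range (k+1), (qBinom (2*k+1) k j)^4 ≤ Real.exp (4 * (W/h)) := by
    intro j hj
    rw [Finset.mem_range, Nat.lt_succ_iff] at hj
    have hb := qBinom_pos hk1 hj
    have hlog : Real.log (qBinom (2*k+1) k j) ≤ W/h := by
      rw [le_div_iff₀ hh]
      have := bound_up j hj
      linarith [bound_up j hj]
    calc (qBinom (2*k+1) k j)^4 = Real.exp (4 * Real.log (qBinom (2*k+1) k j)) := by
          rw [show (4:ℝ) * Real.log (qBinom (2*k+1) k j)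
              = ((4:ℕ):ℝ) * Real.log (qBinom (2*k+1) k j) by norm_num,
            Real.exp_nat_mul, Real.exp_log hb]
      _ ≤ Real.exp (4 * (W/h)) := Real.exp_le_exp.mpr (by linarith)
  have hS_up : S ≤ ((k:ℝ)+1) * Real.exp (4 * (W/h)) := by
    calc S ≤ (Finset.range (k+1)).card • Real.exp (4 * (W/h)) :=
          Finset.sum_le_card_nsmul _ _ _ hexp
      _ = ((k:ℝ)+1) * Real.exp (4 * (W/h)) := by
          rw [Finset.card_range, nsmul_eq_mul]; push_cast; ring
  have hlogS_up : Real.log S ≤ Real.log ((k:ℝ)+1) + 4 * (W/h) := by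
    calc Real.log S ≤ Real.log (((k:ℝ)+1) * Real.exp (4 * (W/h))) :=
          Real.log_le_log hSpos hS_up
      _ = Real.log ((k:ℝ)+1) + 4 * (W/h) := by
          rw [Real.log_mul (by positivity) (Real.exp_ne_zero _), Real.log_exp]
  constructor
  · -- lower
    have step1 : (4/π) * (Phi ((k:ℝ)*h) - Phi (((m:ℕ):ℝ)*h) - Phi (((k-m:ℕ):ℝ)*h)
        + 2*Phi h - 2*h*Real.log 2) ≤ (4/π) * (h * Real.log (qBinom (2*k+1) k m)) :=
      mul_le_mul_of_nonneg_left bound_low (by positivity)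
    have step2 : (4/π) * (h * Real.log (qBinom (2*k+1) k m))
        ≤ (1/π) * (h * Real.log S) := by
      have : h * ((4:ℝ) * Real.log (qBinom (2*k+1) k m)) ≤ h * Real.log S :=
        mul_le_mul_of_nonneg_left hlogS_low hh.le
      calc (4/π) * (h * Real.log (qBinom (2*k+1) k m))
          = (1/π) * (h * (4 * Real.log (qBinom (2*k+1) k m))) := by ring
        _ ≤ (1/π) * (h * Real.log S) := mul_le_mul_of_nonneg_left this (by positivity)
    have step3 : (1/π) * (h * Real.log S) = (1/(2*(k:ℝ)+1)) * Real.log S := by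
      rw [hh_def]; field_simp
    exact le_trans step1 (step2.trans_eq step3)
  · -- upper
    have step1 : (1/(2*(k:ℝ)+1)) * Real.log S
        ≤ (1/(2*(k:ℝ)+1)) * (Real.log ((k:ℝ)+1) + 4 * (W/h)) :=
      mul_le_mul_of_nonneg_left hlogS_up (by positivity)
    have step2 : (1/(2*(k:ℝ)+1)) * (Real.log ((k:ℝ)+1) + 4 * (W/h))
        = Real.log ((k:ℝ)+1)/(2*(k:ℝ)+1) + (4/π) * W := by
      rw [hh_def]
      field_simp
    rw [hW_def] at step2
    exact step1.trans_eq step2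

lemma Lob_eq (x : ℝ) : Lob x = -Phi x := by
  rw [Lob, Phi]
  congr 1
  apply intervalIntegral.integral_congr
  intro t _
  simp only [g, Real.log_abs]

lemma tend_frac (a b : ℝ) :
    Tendsto (fun k : ℕ => (a*(k:ℝ)+b)/(2*(k:ℝ)+1)) atTop (𝓝 (a/2)) := by
  have h1 : Tendsto (fun k : ℕ => (a + b*(1/(k:ℝ)))/(2 + 1/(k:ℝ))) atTop (𝓝 (a/2)) := by
    have hb : Tendsto (fun k : ℕ => a + b*(1/(k:ℝ))) atTop (𝓝 (a + b*0)) :=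
      tendsto_const_nhds.add (tendsto_one_div_atTop_nhds_zero_nat.const_mul b)
    have hd : Tendsto (fun k : ℕ => 2 + 1/(k:ℝ)) atTop (𝓝 (2 + 0)) :=
      tendsto_const_nhds.add tendsto_one_div_atTop_nhds_zero_nat
    have := hb.div hd (by norm_num)
    simp only [mul_zero, add_zero] at this; exact this
  apply h1.congr'
  filter_upwards [eventually_ge_atTop 1] with k hk
  have hk0 : (0:ℝ) < (k:ℝ) := by exact_mod_cast hk
  have hD : (2*(k:ℝ)+1) ≠ 0 := by positivity
  field_simp
  try ring_nf
  try tauto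

lemma phi_comp {x : ℕ → ℝ} {p : ℝ} (hx : Tendsto x atTop (𝓝 p))
    (hp : p ∈ Set.Icc 0 (π/2)) (hmem : ∀ᶠ k in atTop, x k ∈ Set.Icc 0 (π/2)) :
    Tendsto (fun k => Phi (x k)) atTop (𝓝 (Phi p)) := by
  have hcont : ContinuousOn Phi (Set.Icc 0 (π/2)) := by
    have hint : IntegrableOn g (Set.uIcc 0 (π/2)) := by
      rw [Set.uIcc_of_le (by positivity), integrableOn_Icc_iff_integrableOn_Ioc]
      exact g_integrableOn
    have := intervalIntegral.continuousOn_primitive_interval (a := 0) (b := π/2)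
      (μ := volume) hint
    rwa [Set.uIcc_of_le (by positivity)] at this
  exact ((hcont p hp).tendsto).comp (tendsto_nhdsWithin_iff.mpr ⟨hx, hmem⟩)

lemma floor_bounds (k : ℕ) : ((k:ℝ) - 1)/2 ≤ ((k/2:ℕ):ℝ) ∧ ((k/2:ℕ):ℝ) ≤ (k:ℝ)/2 := by
  have h1 : 2*((k/2:ℕ):ℝ) + ((k%2:ℕ):ℝ) = k := by exact_mod_cast Nat.div_add_mod k 2
  have h2 : ((k%2:ℕ):ℝ) ≤ 1 := by
    have : k % 2 ≤ 1 := Nat.lt_succ_iff.mp (Nat.mod_lt k two_pos)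
    exact_mod_cast this
  have h3 : (0:ℝ) ≤ ((k%2:ℕ):ℝ) := Nat.cast_nonneg _
  constructor <;> linarith

/-- `lim_{k→∞} (1/(2k+1)) log( ∑_{j=0}^k [k choose j]_{2k+1}^4 ) = (8/π) Λ(π/4)`:
the analytic core of the Extended Volume Conjecture for universal hyperbolic links of
complexity 1. -/

theorem stmt_11 :
    Filter.Tendsto
      (fun k : ℕ =>
        (1 / (2 * (k : ℝ) + 1)) *
          Real.log (∑ j ∈ Finset.range (k + 1), (qBinom (2 * k + 1) k j) ^ 4))
      Filter.atTop (nhds ((8 / Real.pi) * Lob (Real.pi / 4))) := by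
  have hπ := Real.pi_pos
  set h : ℕ → ℝ := fun k => π/(2*(k:ℝ)+1) with hh_def
  -- basic sequence limits
  have t_h : Tendsto h atTop (𝓝 0) := by
    have := (tend_frac 0 1).mul_const π
    rw [show (0:ℝ)/2*π = 0 by ring] at this
    apply this.congr
    intro k; simp [hh_def]; ring
  have t_x1 : Tendsto (fun k : ℕ => (k:ℝ) * h k) atTop (𝓝 (π/2)) := by
    have := (tend_frac 1 0).mul_const π
    rw [show (1:ℝ)/2*π = π/2 by ring] at this
    apply this.congr
    intro k; simp [hh_def]; ring
  have t_x4 : Tendsto (fun k : ℕ => (k:ℝ) * h k/2) atTop (𝓝 (π/4)) := by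
    have := (tend_frac (1/2) 0).mul_const π
    rw [show ((1:ℝ)/2)/2*π = π/4 by ring] at this
    apply this.congr
    intro k; simp [hh_def]; ring
  have t_x2 : Tendsto (fun k : ℕ => ((k/2:ℕ):ℝ) * h k) atTop (𝓝 (π/4)) := by
    have tlow := (tend_frac (1/2) (-(1/2))).mul_const π
    rw [show ((1:ℝ)/2)/2*π = π/4 by ring] at tlow
    have thigh := (tend_frac (1/2) 0).mul_const π
    rw [show ((1:ℝ)/2)/2*π = π/4 by ring] at thigh
    apply tendsto_of_tendsto_of_tendsto_of_le_of_le' tlow thigh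
    · filter_upwards with k
      have hb := (floor_bounds k).1
      have hpos : 0 ≤ h k := by positivity
      have : ((k:ℝ) - 1)/2 * h k ≤ ((k/2:ℕ):ℝ) * h k := mul_le_mul_of_nonneg_right hb hpos
      calc (1/2*(k:ℝ) + -(1/2))/(2*(k:ℝ)+1)*π = ((k:ℝ)-1)/2 * h k := by
            simp only [hh_def]; field_simp; try ring_nf; try tauto
        _ ≤ _ := this
    · filter_upwards with k
      have hb := (floor_bounds k).2
      have hpos : 0 ≤ h k := by positivity
      have : ((k/2:ℕ):ℝ) * h k ≤ (k:ℝ)/2 * h k := mul_le_mul_of_nonneg_right hb hpos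
      calc ((k/2:ℕ):ℝ) * h k ≤ (k:ℝ)/2 * h k := this
        _ = (1/2*(k:ℝ) + 0)/(2*(k:ℝ)+1)*π := by simp only [hh_def]; field_simp; try ring_nf; try tauto
  have t_x3 : Tendsto (fun k : ℕ => ((k - k/2:ℕ):ℝ) * h k) atTop (𝓝 (π/4)) := by
    have hcast : ∀ k : ℕ, ((k - k/2:ℕ):ℝ) = (k:ℝ) - ((k/2:ℕ):ℝ) := fun k => by
      exact_mod_cast Nat.cast_sub (R := ℝ) (Nat.div_le_self k 2)
    have tlow := (tend_frac (1/2) 0).mul_const π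
    rw [show ((1:ℝ)/2)/2*π = π/4 by ring] at tlow
    have thigh := (tend_frac (1/2) (1/2)).mul_const π
    rw [show ((1:ℝ)/2)/2*π = π/4 by ring] at thigh
    apply tendsto_of_tendsto_of_tendsto_of_le_of_le' tlow thigh
    · filter_upwards with k
      have hb := (floor_bounds k).2
      have hpos : 0 ≤ h k := by positivity
      have hge : (k:ℝ)/2 ≤ ((k - k/2:ℕ):ℝ) := by rw [hcast k]; linarith
      have := mul_le_mul_of_nonneg_right hge hpos
      calc (1/2*(k:ℝ) + 0)/(2*(k:ℝ)+1)*π = (k:ℝ)/2 * h k := by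
            simp only [hh_def]; field_simp; try ring_nf; try tauto
        _ ≤ _ := this
    · filter_upwards with k
      have hb := (floor_bounds k).1
      have hpos : 0 ≤ h k := by positivity
      have hle : ((k - k/2:ℕ):ℝ) ≤ ((k:ℝ)+1)/2 := by rw [hcast k]; linarith
      have := mul_le_mul_of_nonneg_right hle hpos
      calc ((k - k/2:ℕ):ℝ) * h k ≤ ((k:ℝ)+1)/2 * h k := this
        _ = (1/2*(k:ℝ) + 1/2)/(2*(k:ℝ)+1)*π := by simp only [hh_def]; field_simp; try ring_nf; try tauto
  -- membership facts
  have hmem : ∀ᶠ k : ℕ in atTop, (k:ℝ) * h k ∈ Set.Icc 0 (π/2) ∧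
      ((k/2:ℕ):ℝ) * h k ∈ Set.Icc 0 (π/2) ∧ ((k - k/2:ℕ):ℝ) * h k ∈ Set.Icc 0 (π/2) ∧
      (k:ℝ) * h k / 2 ∈ Set.Icc 0 (π/2) ∧ h k ∈ Set.Icc 0 (π/2) := by
    filter_upwards [eventually_ge_atTop 1] with k hk
    have hk1R : (1:ℝ) ≤ (k:ℝ) := by exact_mod_cast hk
    have hpos : 0 < h k := by positivity
    have hx1 : (k:ℝ) * h k ≤ π/2 := by
      rw [hh_def]
      rw [mul_div_assoc', div_le_div_iff₀ (by positivity) (by norm_num)]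
      nlinarith
    have hhpi : h k ≤ π/2 := by
      rw [hh_def, div_le_div_iff₀ (by positivity) (by norm_num)]
      nlinarith
    have hm2 : ((k/2:ℕ):ℝ) ≤ (k:ℝ) := by
      have := (floor_bounds k).2; linarith
    have hm3 : ((k - k/2:ℕ):ℝ) ≤ (k:ℝ) := by
      have : (k - k/2:ℕ) ≤ k := Nat.sub_le k _
      exact_mod_cast this
    refine ⟨⟨by positivity, hx1⟩, ⟨by positivity, ?_⟩, ⟨by positivity, ?_⟩,
      ⟨by positivity, by linarith⟩, ⟨hpos.le, hhpi⟩⟩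
    · calc ((k/2:ℕ):ℝ) * h k ≤ (k:ℝ) * h k := mul_le_mul_of_nonneg_right hm2 hpos.le
        _ ≤ π/2 := hx1
    · calc ((k - k/2:ℕ):ℝ) * h k ≤ (k:ℝ) * h k := mul_le_mul_of_nonneg_right hm3 hpos.le
        _ ≤ π/2 := hx1
  have hmem1 := hmem.mono (fun k hk => hk.1)
  have hmem2 := hmem.mono (fun k hk => hk.2.1)
  have hmem3 := hmem.mono (fun k hk => hk.2.2.1)
  have hmem4 := hmem.mono (fun k hk => hk.2.2.2.1)
  have hmem5 := hmem.mono (fun k hk => hk.2.2.2.2)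
  have hp2 : (π/2) ∈ Set.Icc 0 (π/2) := ⟨by positivity, le_refl _⟩
  have hp4 : (π/4) ∈ Set.Icc 0 (π/2) := ⟨by positivity, by linarith⟩
  have hp0 : (0:ℝ) ∈ Set.Icc 0 (π/2) := ⟨le_refl _, by positivity⟩
  have P1 := phi_comp t_x1 hp2 hmem1
  have P2 := phi_comp t_x2 hp4 hmem2
  have P3 := phi_comp t_x3 hp4 hmem3
  have P4 := phi_comp t_x4 hp4 hmem4
  have P5 := phi_comp t_h hp0 hmem5
  have hPhi0 : Phi 0 = 0 := intervalIntegral.integral_same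
  have hPhi2 : Phi (π/2) = 0 := integral_g_pi_div_two
  -- log term tends to zero
  have t_log : Tendsto (fun k : ℕ => Real.log ((k:ℝ)+1)/(2*(k:ℝ)+1)) atTop (𝓝 0) := by
    have hup : Tendsto (fun k : ℕ => Real.log ((k:ℝ)+1)/((k:ℝ)+1)) atTop (𝓝 0) :=
      Real.isLittleO_log_id_atTop.tendsto_div_nhds_zero.comp
        (tendsto_atTop_add_const_right atTop (1:ℝ) tendsto_natCast_atTop_atTop)
    apply tendsto_of_tendsto_of_tendsto_of_le_of_le' tendsto_const_nhds hup
    · filter_upwards with k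
      have h1 : (0:ℝ) ≤ Real.log ((k:ℝ)+1) := Real.log_nonneg (by
        have : (0:ℝ) ≤ (k:ℝ) := Nat.cast_nonneg k
        linarith)
      positivity
    · filter_upwards with k
      have h1 : (0:ℝ) ≤ Real.log ((k:ℝ)+1) := Real.log_nonneg (by
        have : (0:ℝ) ≤ (k:ℝ) := Nat.cast_nonneg k
        linarith)
      have h2 : (0:ℝ) < (k:ℝ)+1 := by positivity
      have h3 : (k:ℝ)+1 ≤ 2*(k:ℝ)+1 := by
        have : (0:ℝ) ≤ (k:ℝ) := Nat.cast_nonneg k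
        linarith
      gcongr
  -- lower and upper sequences
  have lo_t : Tendsto (fun k : ℕ => (4/π) * (Phi ((k:ℝ)*(h k)) - Phi (((k/2:ℕ):ℝ)*(h k))
      - Phi (((k - k/2:ℕ):ℝ)*(h k)) + 2*Phi (h k)
      - 2*(h k)*Real.log 2)) atTop (𝓝 ((8/π) * Lob (π/4))) := by
    have comb := ((((P1.sub P2).sub P3).add (P5.const_mul 2)).sub
      ((t_h.mul_const (Real.log 2)).const_mul 2)).const_mul (4/π)
    have hval : (8/π) * Lob (π/4)
        = (4/π) * ((Phi (π/2) - Phi (π/4) - Phi (π/4) + 2*Phi 0) - 2*(0*Real.log 2)) := by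
      rw [Lob_eq, hPhi0, hPhi2]; ring
    rw [hval]
    exact comb.congr (fun k => by ring)
  have hi_t : Tendsto (fun k : ℕ => Real.log ((k:ℝ)+1)/(2*(k:ℝ)+1)
      + (4/π) * (Phi ((k:ℝ)*(h k)) - Phi (h k)
        + (h k)*Real.log 2 - 2*Phi ((k:ℝ)*(h k)/2))) atTop (𝓝 ((8/π) * Lob (π/4))) := by
    have comb := t_log.add ((((P1.sub P5).add (t_h.mul_const (Real.log 2))).sub
      (P4.const_mul 2)).const_mul (4/π))
    have hval : (8/π) * Lob (π/4)
        = 0 + (4/π) * ((Phi (π/2) - Phi 0 + 0*Real.log 2) - 2*Phi (π/4)) := by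
      rw [Lob_eq, hPhi0, hPhi2]; ring
    rw [hval]
    exact comb.congr (fun k => by ring)
  -- squeeze
  apply tendsto_of_tendsto_of_tendsto_of_le_of_le' lo_t hi_t
  · filter_upwards [eventually_ge_atTop 1] with k hk
    exact (key k hk).1
  · filter_upwards [eventually_ge_atTop 1] with k hk
    exact (key k hk).2
end
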